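/- arXiv:1506.06087 — 7 statements merged into one kernel-verified Lean document; each statement's English description precedes it below -/
import Mathlib

section
/- A graph G with v vertices and e edges is super edge-magic if and only if there exists a bijection λ from V(G) to {1,2,...,v} such that the set S = {λ(x)+λ(y) : xy ∈ E(G)} consists of e consecutive integers; in that case λ extends to a super edge-magic labeling with magic constant c = v + e + s, where s = min(S). -/
private lemma range_eq_Icc_of_inj {α : Type*} [Fintype α] {f : α → ℕ} {a b : ℕ}
    (hinj : Function.Injective f) (hmem : ∀ x, f x ∈ Set.Icc a b)
    (hcard : Fintype.card α = b + 1 - a) : Set.range f = Set.Icc a b := by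
  classical
  have h1 : Finset.image f Finset.univ ⊆ Finset.Icc a b := by
    intro z hz
    simp only [Finset.mem_image] at hz
    obtain ⟨x, -, rfl⟩ := hz
    simpa [Finset.mem_Icc] using hmem x
  have h2 : (Finset.Icc a b).card ≤ (Finset.image f Finset.univ).card := by
    rw [Finset.card_image_of_injective _ hinj, Nat.card_Icc, Finset.card_univ, hcard]
  have h3 := Finset.eq_of_subset_of_card_le h1 h2
  have h4 : (↑(Finset.image f Finset.univ) : Set ℕ) = ↑(Finset.Icc a b) := by rw [h3]
  simpa [Finset.coe_image, Set.image_univ, Finset.coe_Icc] using h4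

private noncomputable def edgeSum {V : Type} (G : SimpleGraph V) (g : V → ℕ) (E : G.edgeSet) : ℕ :=
  Sym2.lift ⟨fun x y => g x + g y, fun x y => by ring⟩ E.1

private lemma edgeSum_mk {V : Type} {G : SimpleGraph V} (g : V → ℕ) {x y : V}
    (h : s(x, y) ∈ G.edgeSet) : edgeSum G g ⟨s(x, y), h⟩ = g x + g y := rfl

private lemma edge_cases {V : Type} (G : SimpleGraph V) (E : G.edgeSet) :
    ∃ (x y : V) (h : G.Adj x y), E = ⟨s(x, y), G.mem_edgeSet.mpr h⟩ := by
  obtain ⟨q, hq⟩ := E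
  revert hq
  induction q using Sym2.ind with
  | _ x y => exact fun hq => ⟨x, y, G.mem_edgeSet.mp hq, rfl⟩

private lemma sumSet_eq_range {V : Type} (G : SimpleGraph V) (g : V → ℕ) :
    {z | ∃ x y, G.Adj x y ∧ z = g x + g y} = Set.range (edgeSum G g) := by
  ext z
  constructor
  · rintro ⟨x, y, hxy, rfl⟩
    exact ⟨⟨s(x, y), G.mem_edgeSet.mpr hxy⟩, rfl⟩
  · rintro ⟨E, rfl⟩
    obtain ⟨x, y, hxy, rfl⟩ := edge_cases G E
    exact ⟨x, y, hxy, rfl⟩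


/-- A graph `G` with `v` vertices and `e` edges is super edge-magic iff there is a
bijection `g : V → {1,…,v}` whose edge sums form `e` consecutive integers; in that
case `g` extends to a super edge-magic labeling with magic constant `v + e + s`,
where `s` is the minimum edge sum. -/
theorem super_edge_magic_iff {V : Type} [Fintype V] (G : SimpleGraph V)
    [Fintype G.edgeSet] (v e : ℕ) (hv : v = Fintype.card V)
    (he : e = Fintype.card G.edgeSet) :
    ((∃ f : V ⊕ G.edgeSet → ℕ, Function.Injective f ∧
        Set.range f = Set.Icc 1 (v + e) ∧ (∀ x : V, f (Sum.inl x) ≤ v) ∧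
        ∃ c, ∀ (x y : V) (h : G.Adj x y),
          f (Sum.inl x) + f (Sum.inl y)
            + f (Sum.inr ⟨s(x, y), G.mem_edgeSet.mpr h⟩) = c)
      ↔ (∃ g : V → ℕ, Function.Injective g ∧ Set.range g = Set.Icc 1 v ∧
          ∃ s₀, {z | ∃ x y, G.Adj x y ∧ z = g x + g y} = Set.Icc s₀ (s₀ + e - 1)))
    ∧ (∀ (g : V → ℕ) (s₀ : ℕ), Function.Injective g → Set.range g = Set.Icc 1 v →
        {z | ∃ x y, G.Adj x y ∧ z = g x + g y} = Set.Icc s₀ (s₀ + e - 1) →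
        ∃ f : V ⊕ G.edgeSet → ℕ, (∀ x : V, f (Sum.inl x) = g x) ∧
          Function.Injective f ∧ Set.range f = Set.Icc 1 (v + e) ∧
          (∀ x : V, f (Sum.inl x) ≤ v) ∧
          ∀ (x y : V) (h : G.Adj x y),
            f (Sum.inl x) + f (Sum.inl y)
              + f (Sum.inr ⟨s(x, y), G.mem_edgeSet.mpr h⟩) = v + e + s₀) := by
  classical
  have main : ∀ (g : V → ℕ) (s₀ : ℕ), Function.Injective g → Set.range g = Set.Icc 1 v →
      {z | ∃ x y, G.Adj x y ∧ z = g x + g y} = Set.Icc s₀ (s₀ + e - 1) →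
      ∃ f : V ⊕ G.edgeSet → ℕ, (∀ x : V, f (Sum.inl x) = g x) ∧
        Function.Injective f ∧ Set.range f = Set.Icc 1 (v + e) ∧
        (∀ x : V, f (Sum.inl x) ≤ v) ∧
        ∀ (x y : V) (h : G.Adj x y),
          f (Sum.inl x) + f (Sum.inl y)
            + f (Sum.inr ⟨s(x, y), G.mem_edgeSet.mpr h⟩) = v + e + s₀ := by
    intro g s₀ hginj hgrange hS
    have hrσ : Set.range (edgeSum G g) = Set.Icc s₀ (s₀ + e - 1) :=
      (sumSet_eq_range G g).symm.trans hS
    have hg1 : ∀ x, 1 ≤ g x ∧ g x ≤ v := by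
      intro x
      have : g x ∈ Set.Icc 1 v := hgrange ▸ Set.mem_range_self x
      simpa using this
    have hσmem : ∀ E, s₀ ≤ edgeSum G g E ∧ edgeSum G g E ≤ s₀ + e - 1 := by
      intro E
      have : edgeSum G g E ∈ Set.Icc s₀ (s₀ + e - 1) := hrσ ▸ Set.mem_range_self E
      simpa using this
    have hepos : ∀ _ : G.edgeSet, 1 ≤ e := fun E => by
      rw [he]; exact Fintype.card_pos_iff.mpr ⟨E⟩
    have hσinj : Function.Injective (edgeSum G g) := by
      by_cases h0 : e = 0
      · have hE : IsEmpty G.edgeSet := by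
          rw [← Fintype.card_eq_zero_iff]; omega
        exact fun a => (hE.false a).elim
      · have h1e : 1 ≤ e := Nat.one_le_iff_ne_zero.mpr h0
        have h1 : (↑(Finset.image (edgeSum G g) Finset.univ) : Set ℕ)
            = ↑(Finset.Icc s₀ (s₀ + e - 1)) := by
          rw [Finset.coe_image, Finset.coe_univ, Set.image_univ, Finset.coe_Icc]
          exact hrσ
        have h2 : Finset.image (edgeSum G g) Finset.univ = Finset.Icc s₀ (s₀ + e - 1) :=
          Finset.coe_inj.mp h1
        have hcardIcc : (Finset.Icc s₀ (s₀ + e - 1)).card = e := by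
          rw [Nat.card_Icc]; omega
        have huniv : (Finset.univ : Finset G.edgeSet).card = e := by
          rw [Finset.card_univ]; exact he.symm
        have h3 : (Finset.image (edgeSum G g) Finset.univ).card
            = (Finset.univ : Finset G.edgeSet).card := by
          rw [h2]
          rw [hcardIcc]
          rw [huniv]
        have h4 := Finset.card_image_iff.mp h3
        rw [Finset.coe_univ] at h4
        exact Set.injOn_univ.mp h4
    have hσ'mem : ∀ E : G.edgeSet,
        v + 1 ≤ v + e + s₀ - edgeSum G g E ∧ v + e + s₀ - edgeSum G g E ≤ v + e := by
      intro E
      have h1 := hσmem E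
      have h2 := hepos E
      omega
    have hσ'inj : Function.Injective (fun E => v + e + s₀ - edgeSum G g E) := by
      intro a b hab
      have ha := hσmem a
      have hb := hσmem b
      have h2 := hepos a
      simp only at hab
      exact hσinj (by omega)
    have hrσ' : Set.range (fun E => v + e + s₀ - edgeSum G g E) = Set.Icc (v + 1) (v + e) := by
      by_cases h0 : e = 0
      · have hE : IsEmpty G.edgeSet := by
          rw [← Fintype.card_eq_zero_iff]; omega
        rw [Set.range_eq_empty]
        symm
        rw [Set.Icc_eq_empty_iff]
        omega
      · exact range_eq_Icc_of_inj hσ'inj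
          (fun E => by simpa using hσ'mem E) (by omega)
    refine ⟨Sum.elim g (fun E => v + e + s₀ - edgeSum G g E), fun x => rfl, ?_, ?_, ?_, ?_⟩
    · rintro (x | E) (y | F) hab <;> simp only [Sum.elim_inl, Sum.elim_inr] at hab
      · exact congrArg Sum.inl (hginj hab)
      · exfalso
        have h1 := (hg1 x).2
        have h2 := (hσ'mem F).1
        omega
      · exfalso
        have h1 := (hg1 y).2
        have h2 := (hσ'mem E).1
        omega
      · exact congrArg Sum.inr (hσ'inj hab)
    · rw [Set.Sum.elim_range, hgrange, hrσ']
      ext z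
      simp only [Set.mem_union, Set.mem_Icc]
      omega
    · exact fun x => (hg1 x).2
    · intro x y h
      have hmem : g x + g y ∈ Set.Icc s₀ (s₀ + e - 1) := by
        rw [← hS]; exact ⟨x, y, h, rfl⟩
      simp only [Set.mem_Icc] at hmem
      have hE : edgeSum G g ⟨s(x, y), G.mem_edgeSet.mpr h⟩ = g x + g y := rfl
      simp only [Sum.elim_inl, Sum.elim_inr, hE]
      omega
  refine ⟨⟨?_, ?_⟩, main⟩
  · intro hmp
    obtain ⟨f, hfinj, hfr, hfle, c, hc⟩ := hmp
    have hginj : Function.Injective (fun x => f (Sum.inl x)) := by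
      intro a b h
      simpa using hfinj h
    have hgmem : ∀ x, f (Sum.inl x) ∈ Set.Icc 1 v := by
      intro x
      have h1 : f (Sum.inl x) ∈ Set.Icc 1 (v + e) := hfr ▸ Set.mem_range_self _
      simp only [Set.mem_Icc] at h1 ⊢
      exact ⟨h1.1, hfle x⟩
    have hgr : Set.range (fun x => f (Sum.inl x)) = Set.Icc 1 v :=
      range_eq_Icc_of_inj hginj hgmem (by omega)
    refine ⟨fun x => f (Sum.inl x), hginj, hgr, ?_⟩
    by_cases h0 : e = 0
    · refine ⟨1, ?_⟩
      have hE : IsEmpty G.edgeSet := by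
        rw [← Fintype.card_eq_zero_iff]; omega
      have hempty : {z | ∃ x y, G.Adj x y ∧ z = f (Sum.inl x) + f (Sum.inl y)} = ∅ := by
        ext z
        simp only [Set.mem_setOf_eq, Set.mem_empty_iff_false, iff_false]
        rintro ⟨x, y, hxy, -⟩
        exact hE.false ⟨s(x, y), G.mem_edgeSet.mpr hxy⟩
      rw [hempty]
      symm
      rw [Set.Icc_eq_empty_iff]
      omega
    · have h1e : 1 ≤ e := Nat.one_le_iff_ne_zero.mpr h0
      have hFinj : Function.Injective (fun E : G.edgeSet => f (Sum.inr E)) := by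
        intro a b h
        simpa using hfinj h
      have hFmem : ∀ E : G.edgeSet, f (Sum.inr E) ∈ Set.Icc (v + 1) (v + e) := by
        intro E
        have h1 : f (Sum.inr E) ∈ Set.Icc 1 (v + e) := hfr ▸ Set.mem_range_self _
        simp only [Set.mem_Icc] at h1 ⊢
        refine ⟨?_, h1.2⟩
        by_contra hlt
        push_neg at hlt
        have hmem : f (Sum.inr E) ∈ Set.Icc 1 v := by
          simp only [Set.mem_Icc]; omega
        rw [← hgr] at hmem
        obtain ⟨x, hx⟩ := hmem
        simp only at hx
        exact (by simp : (Sum.inl x : V ⊕ G.edgeSet) ≠ Sum.inr E) (hfinj hx)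
      have hFr : Set.range (fun E : G.edgeSet => f (Sum.inr E)) = Set.Icc (v + 1) (v + e) :=
        range_eq_Icc_of_inj hFinj hFmem (by omega)
      have hmax : ∃ E : G.edgeSet, f (Sum.inr E) = v + e := by
        have : (v + e : ℕ) ∈ Set.range (fun E : G.edgeSet => f (Sum.inr E)) := by
          rw [hFr]; simp only [Set.mem_Icc]; omega
        obtain ⟨E, hE⟩ := this
        exact ⟨E, hE⟩
      have hc3 : v + e + 3 ≤ c := by
        obtain ⟨E0, hE0⟩ := hmax
        obtain ⟨x, y, hxy, rfl⟩ := edge_cases G E0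
        have h1 := hc x y hxy
        have hne : f (Sum.inl x) ≠ f (Sum.inl y) := by
          intro hcon
          exact hxy.ne (by simpa using hfinj hcon)
        have h2 := hgmem x
        have h3 := hgmem y
        simp only [Set.mem_Icc] at h2 h3
        omega
      refine ⟨c - (v + e), ?_⟩
      ext z
      simp only [Set.mem_setOf_eq, Set.mem_Icc]
      constructor
      · rintro ⟨x, y, hxy, rfl⟩
        have h1 := hc x y hxy
        have h2 := hFmem ⟨s(x, y), G.mem_edgeSet.mpr hxy⟩
        simp only [Set.mem_Icc] at h2
        omega
      · rintro ⟨hz1, hz2⟩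
        have hw : c - z ∈ Set.range (fun E : G.edgeSet => f (Sum.inr E)) := by
          rw [hFr]; simp only [Set.mem_Icc]; omega
        obtain ⟨E, hE⟩ := hw
        obtain ⟨x, y, hxy, rfl⟩ := edge_cases G E
        simp only at hE
        have h1 := hc x y hxy
        exact ⟨x, y, hxy, by omega⟩
  · rintro ⟨g, hginj, hgr, s₀, hS⟩
    obtain ⟨f, -, hfinj, hfr, hfle, hmagic⟩ := main g s₀ hginj hgr hS
    exact ⟨f, hfinj, hfr, hfle, v + e + s₀, hmagic⟩
end

section
/- For every m ≥ 2 and n ≥ 3, the disjoint union of m isomorphic copies of the fan F_n admits a C₃-supermagic labeling, and the magic constant equals (m/4)(34n+5+(-1)^{n+1}) + 3. -/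
/-- 0-based block index of the `i`-th path vertex in the base fan labeling. -/
def fanVIdx (n i : ℕ) : ℕ := if i % 2 = 0 then i / 2 else (n + 1) / 2 + i / 2

/-- Inverse of `fanVIdx`. -/
def fanVInv (n b : ℕ) : ℕ := if b < (n + 1) / 2 then 2 * b else 2 * (b - (n + 1) / 2) + 1

/-- 0-based block index of the `i`-th spoke in the base fan labeling. -/
def fanEIdx (n i : ℕ) : ℕ :=
  if n % 2 = 1 then 3 * n - 1 - i else if i % 2 = 0 then 3 * n - 2 - i else 3 * n - i

lemma fanVIdx_lt (n i : ℕ) (h : i < n) : fanVIdx n i < n := by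
  unfold fanVIdx; split_ifs <;> omega

lemma fanVIdx_fanVInv (n b : ℕ) (h : b < n) :
    fanVIdx n (fanVInv n b) = b ∧ fanVInv n b < n := by
  unfold fanVIdx fanVInv; split_ifs <;> omega

lemma fanVInv_fanVIdx (n i : ℕ) (h : i < n) : fanVInv n (fanVIdx n i) = i := by
  unfold fanVIdx fanVInv; split_ifs <;> omega

lemma fanEIdx_mem (n i : ℕ) (h : i < n) : 2 * n ≤ fanEIdx n i ∧ fanEIdx n i < 3 * n := by
  unfold fanEIdx; split_ifs <;> omega

lemma fanEIdx_fanEIdx (n b : ℕ) (h2 : 2 * n ≤ b) (h3 : b < 3 * n) :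
    fanEIdx n (fanEIdx n b) = b ∧ fanEIdx n b < n := by
  unfold fanEIdx; split_ifs <;> omega

lemma fanEIdx_invol (n i : ℕ) (h : i < n) : fanEIdx n (fanEIdx n i) = i := by
  unfold fanEIdx; split_ifs <;> omega

lemma fan_sum (n i : ℕ) (h3 : 3 ≤ n) (hi : i < n - 1) :
    2 * (fanVIdx n i + fanVIdx n (i + 1) + fanEIdx n i + fanEIdx n (i + 1) + (n + 1 + i)) + 4
      = 15 * n + n % 2 := by
  unfold fanVIdx fanEIdx; split_ifs <;> omega

/-- `mFₙ` (m ≥ 2 disjoint copies of the fan `Fₙ = K₁ + Pₙ`, n ≥ 3) is `C₃`-supermagic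
with magic constant `(m/4)(34n + 5 + (-1)^{n+1}) + 3`.
Vertices: hubs `Fin m` and path vertices `Fin m × Fin n`.
Edges: spokes `Fin m × Fin n` and path edges `Fin m × Fin (n-1)`. -/
theorem mFan_C3_supermagic (m n : ℕ) (hm : 2 ≤ m) (hn : 3 ≤ n) :
    ∃ f : (Fin m ⊕ Fin m × Fin n) ⊕ ((Fin m × Fin n) ⊕ (Fin m × Fin (n - 1))) → ℕ,
      Function.Injective f ∧
      Set.range f = Set.Icc 1 (m * (n + 1) + m * (2 * n - 1)) ∧
      (∀ x : Fin m ⊕ Fin m × Fin n, f (Sum.inl x) ≤ m * (n + 1)) ∧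
      ∀ (j : Fin m) (i : Fin (n - 1)),
        ((f (Sum.inl (Sum.inl j))
          + f (Sum.inl (Sum.inr (j, ⟨i.val, by have := i.isLt; omega⟩)))
          + f (Sum.inl (Sum.inr (j, ⟨i.val + 1, by have := i.isLt; omega⟩)))
          + f (Sum.inr (Sum.inl (j, ⟨i.val, by have := i.isLt; omega⟩)))
          + f (Sum.inr (Sum.inl (j, ⟨i.val + 1, by have := i.isLt; omega⟩)))
          + f (Sum.inr (Sum.inr (j, i))) : ℕ) : ℚ)
        = (m : ℚ) / 4 * (34 * n + 5 + (-1) ^ (n + 1)) + 3 := by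
  have hm0 : 0 < m := by omega
  -- the labeling
  set F : (Fin m ⊕ Fin m × Fin n) ⊕ ((Fin m × Fin n) ⊕ (Fin m × Fin (n - 1))) → ℕ :=
    fun x => match x with
      | .inl (.inl j) => m * n + j.val + 1
      | .inl (.inr (j, i)) => m * fanVIdx n i.val + j.val + 1
      | .inr (.inl (j, i)) => m * fanEIdx n i.val + (m - 1 - j.val) + 1
      | .inr (.inr (j, i)) => m * (n + 1 + i.val) + (m - 1 - j.val) + 1
    with hF
  have hF1 : ∀ j : Fin m, F (.inl (.inl j)) = m * n + j.val + 1 := fun _ => rfl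
  have hF2 : ∀ (j : Fin m) (i : Fin n),
      F (.inl (.inr (j, i))) = m * fanVIdx n i.val + j.val + 1 := fun _ _ => rfl
  have hF3 : ∀ (j : Fin m) (i : Fin n),
      F (.inr (.inl (j, i))) = m * fanEIdx n i.val + (m - 1 - j.val) + 1 := fun _ _ => rfl
  have hF4 : ∀ (j : Fin m) (i : Fin (n - 1)),
      F (.inr (.inr (j, i))) = m * (n + 1 + i.val) + (m - 1 - j.val) + 1 := fun _ _ => rfl
  have hdiv : ∀ B R : ℕ, R < m → (m * B + R + 1 - 1) / m = B := by
    intro B R h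
    rw [Nat.add_sub_cancel, Nat.mul_add_div hm0, Nat.div_eq_of_lt h, Nat.add_zero]
  have hmod : ∀ B R : ℕ, R < m → (m * B + R + 1 - 1) % m = R := by
    intro B R h
    rw [Nat.add_sub_cancel, Nat.mul_add_mod, Nat.mod_eq_of_lt h]
  -- the decoding map
  set G : ℕ → (Fin m ⊕ Fin m × Fin n) ⊕ ((Fin m × Fin n) ⊕ (Fin m × Fin (n - 1))) :=
    fun l =>
      if hb : (l - 1) / m < n then
        .inl (.inr (⟨(l - 1) % m, Nat.mod_lt _ hm0⟩,
          ⟨fanVInv n ((l - 1) / m), (fanVIdx_fanVInv n _ hb).2⟩))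
      else if hb2 : (l - 1) / m < n + 1 then
        .inl (.inl ⟨(l - 1) % m, Nat.mod_lt _ hm0⟩)
      else if hb3 : (l - 1) / m < 2 * n then
        .inr (.inr (⟨m - 1 - (l - 1) % m, by omega⟩, ⟨(l - 1) / m - (n + 1), by omega⟩))
      else
        .inr (.inl (⟨m - 1 - (l - 1) % m, by omega⟩,
          ⟨fanEIdx n ((l - 1) / m) % n, Nat.mod_lt _ (by omega)⟩))
    with hG
  -- characterizations of G
  have hG2 : ∀ (l : ℕ) (j : Fin m) (i : Fin n),
      (l - 1) / m = fanVIdx n i.val → (l - 1) % m = j.val →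
      G l = .inl (.inr (j, i)) := by
    intro l j i h1 h2
    have hcond : (l - 1) / m < n := by rw [h1]; exact fanVIdx_lt n i.val i.isLt
    rw [hG]
    simp only [dif_pos hcond]
    simp only [Sum.inl.injEq, Sum.inr.injEq, Prod.mk.injEq, Fin.ext_iff]
    exact ⟨h2, by rw [h1, fanVInv_fanVIdx n i.val i.isLt]⟩
  have hG1 : ∀ (l : ℕ) (j : Fin m),
      (l - 1) / m = n → (l - 1) % m = j.val → G l = .inl (.inl j) := by
    intro l j h1 h2
    rw [hG]
    simp only [dif_neg (by omega : ¬ (l - 1) / m < n), dif_pos (by omega : (l - 1) / m < n + 1)]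
    simp only [Sum.inl.injEq, Fin.ext_iff]
    exact h2
  have hG4 : ∀ (l : ℕ) (j : Fin m) (i : Fin (n - 1)),
      (l - 1) / m = n + 1 + i.val → (l - 1) % m = m - 1 - j.val →
      G l = .inr (.inr (j, i)) := by
    intro l j i h1 h2
    have hi := i.isLt
    have hj := j.isLt
    rw [hG]
    simp only [dif_neg (by omega : ¬ (l - 1) / m < n),
      dif_neg (by omega : ¬ (l - 1) / m < n + 1), dif_pos (by omega : (l - 1) / m < 2 * n)]
    simp only [Sum.inr.injEq, Prod.mk.injEq, Fin.ext_iff]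
    exact ⟨by omega, by omega⟩
  have hG3 : ∀ (l : ℕ) (j : Fin m) (i : Fin n),
      (l - 1) / m = fanEIdx n i.val → (l - 1) % m = m - 1 - j.val →
      G l = .inr (.inl (j, i)) := by
    intro l j i h1 h2
    have hj := j.isLt
    obtain ⟨hm1, hm2⟩ := fanEIdx_mem n i.val i.isLt
    rw [hG]
    simp only [dif_neg (by omega : ¬ (l - 1) / m < n),
      dif_neg (by omega : ¬ (l - 1) / m < n + 1), dif_neg (by omega : ¬ (l - 1) / m < 2 * n)]
    simp only [Sum.inr.injEq, Sum.inl.injEq, Prod.mk.injEq, Fin.ext_iff]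
    refine ⟨by omega, ?_⟩
    rw [h1, fanEIdx_invol n i.val i.isLt, Nat.mod_eq_of_lt i.isLt]
  -- G is a left inverse of F
  have hGF : ∀ x, G (F x) = x := by
    rintro ((j | ⟨j, i⟩) | (⟨j, i⟩ | ⟨j, i⟩))
    · exact hG1 _ j (by rw [hF1]; exact hdiv _ _ j.isLt) (by rw [hF1]; exact hmod _ _ j.isLt)
    · exact hG2 _ j i (by rw [hF2]; exact hdiv _ _ j.isLt) (by rw [hF2]; exact hmod _ _ j.isLt)
    · have hj := j.isLt
      exact hG3 _ j i (by rw [hF3]; exact hdiv _ _ (by omega))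
        (by rw [hF3]; exact hmod _ _ (by omega))
    · have hj := j.isLt
      exact hG4 _ j i (by rw [hF4]; exact hdiv _ _ (by omega))
        (by rw [hF4]; exact hmod _ _ (by omega))
  refine ⟨F, Function.LeftInverse.injective hGF, ?_, ?_, ?_⟩
  · -- range F = Icc 1 (m*(n+1) + m*(2n-1))
    have hN : m * (n + 1) + m * (2 * n - 1) = m * (3 * n) := by
      rw [← Nat.mul_add]; congr 1; omega
    ext l
    simp only [Set.mem_range, Set.mem_Icc]
    rw [hN]
    constructor
    · rintro ⟨x, rfl⟩
      obtain ((j | ⟨j, i⟩) | (⟨j, i⟩ | ⟨j, i⟩)) := x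
      · rw [hF1]
        have hj := j.isLt
        have h1 : m * (n + 1) ≤ m * (3 * n) := Nat.mul_le_mul_left m (by omega)
        have h2 : m * (n + 1) = m * n + m := by ring
        omega
      · rw [hF2]
        have hj := j.isLt
        have hv := fanVIdx_lt n i.val i.isLt
        have h1 : m * (fanVIdx n i.val + 1) ≤ m * (3 * n) := Nat.mul_le_mul_left m (by omega)
        have h2 : m * (fanVIdx n i.val + 1) = m * fanVIdx n i.val + m := by ring
        omega
      · rw [hF3]
        have hj := j.isLt
        have he := fanEIdx_mem n i.val i.isLt
        have h1 : m * (fanEIdx n i.val + 1) ≤ m * (3 * n) := Nat.mul_le_mul_left m (by omega)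
        have h2 : m * (fanEIdx n i.val + 1) = m * fanEIdx n i.val + m := by ring
        omega
      · rw [hF4]
        have hj := j.isLt
        have hi := i.isLt
        have h1 : m * (n + 1 + i.val + 1) ≤ m * (3 * n) := Nat.mul_le_mul_left m (by omega)
        have h2 : m * (n + 1 + i.val + 1) = m * (n + 1 + i.val) + m := by ring
        omega
    · rintro ⟨h1, h2⟩
      have hr : (l - 1) % m < m := Nat.mod_lt _ hm0
      have hb3 : (l - 1) / m < 3 * n := by
        rw [Nat.div_lt_iff_lt_mul hm0]
        have h3 : 3 * n * m = m * (3 * n) := by ring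
        omega
      rcases lt_or_ge ((l - 1) / m) n with hb | hb
      · refine ⟨.inl (.inr (⟨(l - 1) % m, hr⟩, ⟨fanVInv n ((l - 1) / m),
          (fanVIdx_fanVInv n _ hb).2⟩)), ?_⟩
        rw [hF2]
        show m * fanVIdx n (fanVInv n ((l - 1) / m)) + (l - 1) % m + 1 = l
        rw [(fanVIdx_fanVInv n _ hb).1, Nat.div_add_mod]
        omega
      rcases eq_or_lt_of_le hb with hb2 | hb2
      · refine ⟨.inl (.inl ⟨(l - 1) % m, hr⟩), ?_⟩
        rw [hF1]
        show m * n + (l - 1) % m + 1 = l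
        rw [hb2, Nat.div_add_mod]
        omega
      rcases lt_or_ge ((l - 1) / m) (2 * n) with hb4 | hb4
      · refine ⟨.inr (.inr (⟨m - 1 - (l - 1) % m, by omega⟩,
          ⟨(l - 1) / m - (n + 1), by omega⟩)), ?_⟩
        rw [hF4]
        show m * (n + 1 + ((l - 1) / m - (n + 1))) + (m - 1 - (m - 1 - (l - 1) % m)) + 1 = l
        rw [show n + 1 + ((l - 1) / m - (n + 1)) = (l - 1) / m from by omega,
          show m - 1 - (m - 1 - (l - 1) % m) = (l - 1) % m from by omega,
          Nat.div_add_mod]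
        omega
      · have hee := fanEIdx_fanEIdx n ((l - 1) / m) hb4 hb3
        refine ⟨.inr (.inl (⟨m - 1 - (l - 1) % m, by omega⟩,
          ⟨fanEIdx n ((l - 1) / m), hee.2⟩)), ?_⟩
        rw [hF3]
        show m * fanEIdx n (fanEIdx n ((l - 1) / m)) + (m - 1 - (m - 1 - (l - 1) % m)) + 1 = l
        rw [hee.1, show m - 1 - (m - 1 - (l - 1) % m) = (l - 1) % m from by omega,
          Nat.div_add_mod]
        omega
  · -- vertex labels are at most m*(n+1)
    rintro (j | ⟨j, i⟩)
    · rw [hF1]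
      have hj := j.isLt
      have h2 : m * (n + 1) = m * n + m := by ring
      omega
    · rw [hF2]
      have hj := j.isLt
      have hv := fanVIdx_lt n i.val i.isLt
      have h1 : m * (fanVIdx n i.val + 1) ≤ m * (n + 1) := Nat.mul_le_mul_left m (by omega)
      have h2 : m * (fanVIdx n i.val + 1) = m * fanVIdx n i.val + m := by ring
      omega
  · -- the magic sum
    intro j i
    have hj := j.isLt
    have hi := i.isLt
    show ((m * n + j.val + 1
        + (m * fanVIdx n i.val + j.val + 1)
        + (m * fanVIdx n (i.val + 1) + j.val + 1)
        + (m * fanEIdx n i.val + (m - 1 - j.val) + 1)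
        + (m * fanEIdx n (i.val + 1) + (m - 1 - j.val) + 1)
        + (m * (n + 1 + i.val) + (m - 1 - j.val) + 1) : ℕ) : ℚ)
      = (m : ℚ) / 4 * (34 * n + 5 + (-1) ^ (n + 1)) + 3
    have hsum := fan_sum n i.val hn (by omega)
    have key : 2 * (m * n + j.val + 1
        + (m * fanVIdx n i.val + j.val + 1)
        + (m * fanVIdx n (i.val + 1) + j.val + 1)
        + (m * fanEIdx n i.val + (m - 1 - j.val) + 1)
        + (m * fanEIdx n (i.val + 1) + (m - 1 - j.val) + 1)
        + (m * (n + 1 + i.val) + (m - 1 - j.val) + 1))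
        = m * (17 * n + 2 + n % 2) + 6 := by
      have expand : 2 * (m * n + j.val + 1
          + (m * fanVIdx n i.val + j.val + 1)
          + (m * fanVIdx n (i.val + 1) + j.val + 1)
          + (m * fanEIdx n i.val + (m - 1 - j.val) + 1)
          + (m * fanEIdx n (i.val + 1) + (m - 1 - j.val) + 1)
          + (m * (n + 1 + i.val) + (m - 1 - j.val) + 1))
          = 2 * (m * n) + 2 * (m * fanVIdx n i.val) + 2 * (m * fanVIdx n (i.val + 1))
            + 2 * (m * fanEIdx n i.val) + 2 * (m * fanEIdx n (i.val + 1))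
            + 2 * (m * (n + 1 + i.val)) + 6 * m + 6 := by omega
      have collect : 2 * (m * n) + 2 * (m * fanVIdx n i.val) + 2 * (m * fanVIdx n (i.val + 1))
          + 2 * (m * fanEIdx n i.val) + 2 * (m * fanEIdx n (i.val + 1))
          + 2 * (m * (n + 1 + i.val)) + 6 * m
          = m * (2 * n + (2 * (fanVIdx n i.val + fanVIdx n (i.val + 1) + fanEIdx n i.val
              + fanEIdx n (i.val + 1) + (n + 1 + i.val)) + 4) + 2) := by ring
      rw [expand, collect, hsum]
      congr 1
      congr 1
      omega
    rcases Nat.even_or_odd n with he | ho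
    · have h2 : n % 2 = 0 := Nat.even_iff.mp he
      have ho1 : Odd (n + 1) := Even.add_one he
      rw [ho1.neg_one_pow]
      have key2 : (m * n + j.val + 1
          + (m * fanVIdx n i.val + j.val + 1)
          + (m * fanVIdx n (i.val + 1) + j.val + 1)
          + (m * fanEIdx n i.val + (m - 1 - j.val) + 1)
          + (m * fanEIdx n (i.val + 1) + (m - 1 - j.val) + 1)
          + (m * (n + 1 + i.val) + (m - 1 - j.val) + 1)) * 2
          = m * (17 * n + 2) + 6 := by
        rw [show (17 : ℕ) * n + 2 = 17 * n + 2 + n % 2 from by omega]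
        omega
      rw [show (m : ℚ) / 4 * (34 * n + 5 + (-1)) + 3
          = ((m * (17 * n + 2) + 6 : ℕ) : ℚ) / 2 from by push_cast; ring,
        eq_div_iff (by norm_num : (2 : ℚ) ≠ 0)]
      exact_mod_cast key2
    · have h2 : n % 2 = 1 := Nat.odd_iff.mp ho
      have he1 : Even (n + 1) := Odd.add_one ho
      rw [he1.neg_one_pow]
      have key2 : (m * n + j.val + 1
          + (m * fanVIdx n i.val + j.val + 1)
          + (m * fanVIdx n (i.val + 1) + j.val + 1)
          + (m * fanEIdx n i.val + (m - 1 - j.val) + 1)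
          + (m * fanEIdx n (i.val + 1) + (m - 1 - j.val) + 1)
          + (m * (n + 1 + i.val) + (m - 1 - j.val) + 1)) * 2
          = m * (17 * n + 3) + 6 := by
        rw [show (17 : ℕ) * n + 3 = 17 * n + 2 + n % 2 from by omega]
        omega
      rw [show (m : ℚ) / 4 * (34 * n + 5 + 1) + 3
          = ((m * (17 * n + 3) + 6 : ℕ) : ℚ) / 2 from by push_cast; ring,
        eq_div_iff (by norm_num : (2 : ℚ) ≠ 0)]
      exact_mod_cast key2
end

section
/- For every m ≥ 2 and n ≥ 2, the disjoint union of m copies of the ladder L_n = P_n × P_2 admits a C₄-supermagic labeling with magic constant m(17n−2)+4. -/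
private lemma enc_lt {m N i j : ℕ} (hi : i < N) (hj : j < m) : i * m + j < m * N := by
  calc i * m + j < (i + 1) * m := by rw [add_mul]; omega
    _ ≤ N * m := Nat.mul_le_mul_right m hi
    _ = m * N := Nat.mul_comm _ _

private lemma enc_inj {m i1 j1 i2 j2 : ℕ} (hj1 : j1 < m) (hj2 : j2 < m)
    (h : i1 * m + j1 = i2 * m + j2) : i1 = i2 ∧ j1 = j2 := by
  have hi : i1 = i2 := by
    rcases Nat.lt_trichotomy i1 i2 with hl | he | hg
    · exfalso
      have h2 : (i1 + 1) * m ≤ i2 * m := Nat.mul_le_mul_right m hl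
      rw [add_mul] at h2; omega
    · exact he
    · exfalso
      have h2 : (i2 + 1) * m ≤ i1 * m := Nat.mul_le_mul_right m hg
      rw [add_mul] at h2; omega
  subst hi
  exact ⟨rfl, Nat.add_left_cancel h⟩

private def L (m n : ℕ) :
    ((Fin m × Fin n) ⊕ (Fin m × Fin n)) ⊕
      ((Fin m × Fin n) ⊕ ((Fin m × Fin (n - 1)) ⊕ (Fin m × Fin (n - 1)))) → ℕ
  | .inl (.inl (j, i)) => 1 + ((i : ℕ) * m + (j : ℕ))
  | .inl (.inr (j, i)) => 2 * (m * n) - ((i : ℕ) * m + (j : ℕ))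
  | .inr (.inl (j, i)) => 2 * (m * n) + 1 + ((i : ℕ) * m + (j : ℕ))
  | .inr (.inr (.inl (j, i))) => 4 * (m * n) - (m + ((i : ℕ) * m + (j : ℕ)))
  | .inr (.inr (.inr (j, i))) => 5 * (m * n) - (2 * m + ((i : ℕ) * m + (j : ℕ)))

private lemma hmn_eq (m n : ℕ) (hn : 2 ≤ n) : m * (n - 1) + m = m * n := by
  cases n with
  | zero => omega
  | succ k => simp [Nat.mul_succ]

private lemma L_inj (m n : ℕ) (hm : 2 ≤ m) (hn : 2 ≤ n) : Function.Injective (L m n) := by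
  have hmn : m * (n - 1) + m = m * n := hmn_eq m n hn
  rintro ((⟨j1, i1⟩ | ⟨j1, i1⟩) | (⟨j1, i1⟩ | ⟨j1, i1⟩ | ⟨j1, i1⟩))
         ((⟨j2, i2⟩ | ⟨j2, i2⟩) | (⟨j2, i2⟩ | ⟨j2, i2⟩ | ⟨j2, i2⟩)) h <;>
    simp only [L] at h <;>
    (have e1 := enc_lt i1.isLt j1.isLt
     have e2 := enc_lt i2.isLt j2.isLt
     first
     | (exfalso; omega)
     | (have hk : (i1 : ℕ) * m + (j1 : ℕ) = (i2 : ℕ) * m + (j2 : ℕ) := by omega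
        obtain ⟨hi, hj⟩ := enc_inj j1.isLt j2.isLt hk
        simp only [Sum.inl.injEq, Sum.inr.injEq, Prod.mk.injEq, Fin.ext_iff]
        exact ⟨hj, hi⟩))

private lemma L_bounds (m n : ℕ) (hm : 2 ≤ m) (hn : 2 ≤ n) :
    ∀ x, 1 ≤ L m n x ∧ L m n x ≤ 2 * m * n + (3 * m * n - 2 * m) := by
  have hmn : m * (n - 1) + m = m * n := hmn_eq m n hn
  have h2 : 2 * m * n = 2 * (m * n) := by ring
  have h3 : 3 * m * n = 3 * (m * n) := by ring
  rintro ((⟨j, i⟩ | ⟨j, i⟩) | (⟨j, i⟩ | ⟨j, i⟩ | ⟨j, i⟩)) <;>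
    simp only [L] <;>
    (have e1 := enc_lt i.isLt j.isLt; omega)

private lemma L_range (m n : ℕ) (hm : 2 ≤ m) (hn : 2 ≤ n) :
    Set.range (L m n) = Set.Icc 1 (2 * m * n + (3 * m * n - 2 * m)) := by
  classical
  have hmn : m * (n - 1) + m = m * n := hmn_eq m n hn
  have h2 : 2 * m * n = 2 * (m * n) := by ring
  have h3 : 3 * m * n = 3 * (m * n) := by ring
  set B := 2 * m * n + (3 * m * n - 2 * m) with hB
  have hsub : Finset.image (L m n) Finset.univ ⊆ Finset.Icc 1 B := by
    intro y hy
    simp only [Finset.mem_image, Finset.mem_univ, true_and] at hy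
    obtain ⟨x, rfl⟩ := hy
    simpa [Finset.mem_Icc] using L_bounds m n hm hn x
  have hcard : (Finset.Icc 1 B).card ≤ (Finset.image (L m n) Finset.univ).card := by
    rw [Finset.card_image_of_injective _ (L_inj m n hm hn), Nat.card_Icc, Finset.card_univ]
    simp only [Fintype.card_sum, Fintype.card_prod, Fintype.card_fin]
    omega
  have hEq := Finset.eq_of_subset_of_card_le hsub hcard
  have h1 : (↑(Finset.image (L m n) Finset.univ) : Set ℕ) = Set.range (L m n) := by
    ext y
    simp [Finset.mem_image, Set.mem_range, eq_comm]
  rw [← h1, hEq, Finset.coe_Icc]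

/-- `mLₙ` (m ≥ 2 copies of the ladder `Lₙ = Pₙ × P₂`, n ≥ 2) is `C₄`-supermagic
with magic constant `m(17n - 2) + 4`.
Vertices: `u`-vertices and `v`-vertices, each `Fin m × Fin n`.
Edges: rungs `Fin m × Fin n`, `u`-path edges and `v`-path edges `Fin m × Fin (n-1)`. -/
theorem mLadder_C4_supermagic (m n : ℕ) (hm : 2 ≤ m) (hn : 2 ≤ n) :
    ∃ f : ((Fin m × Fin n) ⊕ (Fin m × Fin n)) ⊕
          ((Fin m × Fin n) ⊕ ((Fin m × Fin (n - 1)) ⊕ (Fin m × Fin (n - 1)))) → ℕ,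
      Function.Injective f ∧
      Set.range f = Set.Icc 1 (2 * m * n + (3 * m * n - 2 * m)) ∧
      (∀ x : (Fin m × Fin n) ⊕ (Fin m × Fin n), f (Sum.inl x) ≤ 2 * m * n) ∧
      ∀ (j : Fin m) (i : Fin (n - 1)),
        f (Sum.inl (Sum.inl (j, ⟨i.val, by have := i.isLt; omega⟩)))
          + f (Sum.inl (Sum.inl (j, ⟨i.val + 1, by have := i.isLt; omega⟩)))
          + f (Sum.inl (Sum.inr (j, ⟨i.val, by have := i.isLt; omega⟩)))
          + f (Sum.inl (Sum.inr (j, ⟨i.val + 1, by have := i.isLt; omega⟩)))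
          + f (Sum.inr (Sum.inl (j, ⟨i.val, by have := i.isLt; omega⟩)))
          + f (Sum.inr (Sum.inl (j, ⟨i.val + 1, by have := i.isLt; omega⟩)))
          + f (Sum.inr (Sum.inr (Sum.inl (j, i))))
          + f (Sum.inr (Sum.inr (Sum.inr (j, i))))
        = m * (17 * n - 2) + 4 := by
  have hmn : m * (n - 1) + m = m * n := hmn_eq m n hn
  have h2 : 2 * m * n = 2 * (m * n) := by ring
  refine ⟨L m n, L_inj m n hm hn, L_range m n hm hn, ?_, ?_⟩
  · rintro (⟨j, i⟩ | ⟨j, i⟩) <;>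
      simp only [L] <;>
      (have e1 := enc_lt i.isLt j.isLt; omega)
  · intro j i
    have hi1 : (i : ℕ) + 1 < n := by have := i.isLt; omega
    have e2 := enc_lt hi1 j.isLt
    have e3 := enc_lt i.isLt j.isLt
    have hexp : ((i : ℕ) + 1) * m = (i : ℕ) * m + m := by ring
    have h17 : m * (17 * n - 2) + 2 * m = 17 * (m * n) := by
      rw [Nat.mul_sub_left_distrib]
      have ha : m * (17 * n) = 17 * (m * n) := by ring
      have hb : m * 2 = 2 * m := by ring
      have hc : 2 * m ≤ m * (17 * n) := by nlinarith
      omega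
    simp only [L, Fin.val_mk]
    omega
end

section
/- For every m ≥ 2 and even n ≥ 2, the disjoint union of m copies of the book graph B_n = K_{1,n} × K₂ admits a C₄-supermagic labeling with magic constant 15mn + 17m + 4. -/
def fU (m J k : ℕ) : ℕ := if k = 0 then 1 + J else 2*m - J
def fV (m q J I : ℕ) : ℕ := 2*m + 1 + ((I+1)%2)*(m*q) + (I/2)*m + J
def fW (m q J I : ℕ) : ℕ := 2*m + 2*(m*q) + 1 + J*(q+q) + I
def fE (m q J : ℕ) : ℕ := 5*(m*q) + 3*m - J
def fA (m q J I : ℕ) : ℕ := 2*m + 4*(m*q) + 1 + (I%2)*(m*q+m) + (I/2)*m + J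
def fB (m q J I : ℕ) : ℕ := 3*m + 8*(m*q) - (J*(q+q) + I)
def fC (m q J I : ℕ) : ℕ := 3*m + 10*(m*q) - (I*m + J)

lemma key1 {m a b j k : ℕ} (hj : j < m) (hk : k < m) (h : a*m + j = b*m + k) :
    a = b ∧ j = k := by
  have hm : 0 < m := lt_of_le_of_lt (Nat.zero_le _) hj
  have h1 : (j + m*a) / m = a := by
    rw [Nat.add_mul_div_left _ _ hm, Nat.div_eq_of_lt hj, Nat.zero_add]
  have h2 : (k + m*b) / m = b := by
    rw [Nat.add_mul_div_left _ _ hm, Nat.div_eq_of_lt hk, Nat.zero_add]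
  have h' : j + m*a = k + m*b := by
    have e1 : j + m*a = a*m + j := by ring
    have e2 : k + m*b = b*m + k := by ring
    rw [e1, e2, h]
  have hab : a = b := by rw [← h1, ← h2, h']
  refine ⟨hab, ?_⟩
  subst hab
  exact Nat.add_right_cancel (by linarith [h'] : j + m*a = k + m*a)

lemma bnd1 {m q t j : ℕ} (ht : t < q) (hj : j < m) : t*m + j + 1 ≤ q*m := by
  have h1 : t*m + (j+1) ≤ t*m + m := Nat.add_le_add_left hj _
  have h2 : (t+1)*m ≤ q*m := Nat.mul_le_mul_right m ht
  have h3 : t*m + m = (t+1)*m := by ring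
  linarith

lemma BU {m J : ℕ} (k : ℕ) (hj : J < m) (hm : 1 ≤ m) : 1 ≤ fU m J k ∧ fU m J k ≤ 2*m := by
  unfold fU; split <;> omega

lemma BV {m q J I : ℕ} (hj : J < m) (hi : I < q+q) :
    2*m+1 ≤ fV m q J I ∧ fV m q J I ≤ 2*m + 2*(m*q) := by
  have ht : I/2 < q := by omega
  have h1 : (I/2)*m + J + 1 ≤ q*m := bnd1 ht hj
  have h2 : ((I+1)%2)*(m*q) ≤ 1*(m*q) := Nat.mul_le_mul_right _ (by omega)
  have h3 : q*m = m*q := Nat.mul_comm _ _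
  unfold fV
  constructor
  · linarith [Nat.zero_le (((I+1)%2)*(m*q)), Nat.zero_le ((I/2)*m)]
  · linarith

lemma BW {m q J I : ℕ} (hj : J < m) (hi : I < q+q) :
    2*m + 2*(m*q) + 1 ≤ fW m q J I ∧ fW m q J I ≤ 2*m + 4*(m*q) := by
  have h1 : J*(q+q) + I + 1 ≤ m*(q+q) := bnd1 hj hi
  have h2 : m*(q+q) = 2*(m*q) := by ring
  unfold fW
  constructor
  · linarith [Nat.zero_le (J*(q+q))]
  · linarith

lemma BE {m q J : ℕ} (hj : J < m) :
    2*m + 5*(m*q) + 1 ≤ fE m q J ∧ fE m q J ≤ 3*m + 5*(m*q) := by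
  obtain ⟨A, hA⟩ : ∃ A, m*q = A := ⟨_, rfl⟩
  unfold fE; rw [hA]; omega

lemma BA {m q J I : ℕ} (hj : J < m) (hi : I < q+q) :
    2*m + 4*(m*q) + 1 ≤ fA m q J I ∧ fA m q J I ≤ 3*m + 6*(m*q)
    ∧ (I % 2 = 0 → fA m q J I ≤ 2*m + 5*(m*q))
    ∧ (I % 2 = 1 → 3*m + 5*(m*q) + 1 ≤ fA m q J I) := by
  have ht : I/2 < q := by omega
  have h1 : (I/2)*m + J + 1 ≤ q*m := bnd1 ht hj
  have h3 : q*m = m*q := Nat.mul_comm _ _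
  have h2 : (I%2)*(m*q+m) ≤ 1*(m*q+m) := Nat.mul_le_mul_right _ (by omega)
  unfold fA
  refine ⟨by linarith [Nat.zero_le ((I%2)*(m*q+m)), Nat.zero_le ((I/2)*m)], by linarith, ?_, ?_⟩
  · intro hp; rw [hp]; simp; linarith
  · intro hp; rw [hp]; simp; linarith [Nat.zero_le ((I/2)*m)]

lemma BB {m q J I : ℕ} (hj : J < m) (hi : I < q+q) :
    3*m + 6*(m*q) + 1 ≤ fB m q J I ∧ fB m q J I ≤ 3*m + 8*(m*q) := by
  have h1 : J*(q+q) + I + 1 ≤ m*(q+q) := bnd1 hj hi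
  have h2 : m*(q+q) = 2*(m*q) := by ring
  obtain ⟨A, hA⟩ : ∃ A, m*q = A := ⟨_, rfl⟩
  obtain ⟨X, hX⟩ : ∃ X, J*(q+q) + I = X := ⟨_, rfl⟩
  unfold fB; rw [hA, hX]
  rw [hA] at h2
  rw [hX] at h1
  omega

lemma BC {m q J I : ℕ} (hj : J < m) (hi : I < q+q) :
    3*m + 8*(m*q) + 1 ≤ fC m q J I ∧ fC m q J I ≤ 3*m + 10*(m*q) := by
  have h1 : I*m + J + 1 ≤ (q+q)*m := bnd1 hi hj
  have h2 : (q+q)*m = 2*(m*q) := by ring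
  obtain ⟨A, hA⟩ : ∃ A, m*q = A := ⟨_, rfl⟩
  obtain ⟨X, hX⟩ : ∃ X, I*m + J = X := ⟨_, rfl⟩
  unfold fC; rw [hA, hX]
  rw [hA] at h2
  rw [hX] at h1
  omega

set_option maxHeartbeats 2000000 in
/-- `mBₙ` (m ≥ 2 copies of the book graph `Bₙ = K_{1,n} × K₂`, even n ≥ 2) is
`C₄`-supermagic with magic constant `15mn + 17m + 4`.
Vertices: spine vertices `u₁, u₂` (`Fin m × Fin 2`), page vertices `vᵢ` and `wᵢ`
(each `Fin m × Fin n`).  Edges: spine edges `u₁u₂` (`Fin m`), edges `u₁wᵢ`,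
`u₂vᵢ` and `vᵢwᵢ` (each `Fin m × Fin n`). The pages are 4-cycles `u₁u₂vᵢwᵢ`. -/
theorem mBook_even_C4_supermagic (m n : ℕ) (hm : 2 ≤ m) (hn : 2 ≤ n) (heven : Even n) :
    ∃ f : ((Fin m × Fin 2) ⊕ ((Fin m × Fin n) ⊕ (Fin m × Fin n))) ⊕
          (Fin m ⊕ ((Fin m × Fin n) ⊕ ((Fin m × Fin n) ⊕ (Fin m × Fin n)))) → ℕ,
      Function.Injective f ∧
      Set.range f = Set.Icc 1 (2 * m * (n + 1) + m * (3 * n + 1)) ∧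
      (∀ x : (Fin m × Fin 2) ⊕ ((Fin m × Fin n) ⊕ (Fin m × Fin n)),
        f (Sum.inl x) ≤ 2 * m * (n + 1)) ∧
      ∀ (j : Fin m) (i : Fin n),
        f (Sum.inl (Sum.inl (j, 0)))
          + f (Sum.inl (Sum.inl (j, 1)))
          + f (Sum.inl (Sum.inr (Sum.inl (j, i))))
          + f (Sum.inl (Sum.inr (Sum.inr (j, i))))
          + f (Sum.inr (Sum.inl j))
          + f (Sum.inr (Sum.inr (Sum.inl (j, i))))
          + f (Sum.inr (Sum.inr (Sum.inr (Sum.inl (j, i)))))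
          + f (Sum.inr (Sum.inr (Sum.inr (Sum.inr (j, i)))))
        = 15 * m * n + 17 * m + 4 := by
  obtain ⟨q, rfl⟩ := heven
  have hq : 1 ≤ q := by omega
  have hm1 : 1 ≤ m := by omega
  have hinj : Function.Injective (Sum.elim
      (Sum.elim (fun p : Fin m × Fin 2 => fU m p.1.val p.2.val)
        (Sum.elim (fun p : Fin m × Fin (q+q) => fV m q p.1.val p.2.val)
          (fun p : Fin m × Fin (q+q) => fW m q p.1.val p.2.val)))
      (Sum.elim (fun j : Fin m => fE m q j.val)
        (Sum.elim (fun p : Fin m × Fin (q+q) => fA m q p.1.val p.2.val)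
          (Sum.elim (fun p : Fin m × Fin (q+q) => fB m q p.1.val p.2.val)
            (fun p : Fin m × Fin (q+q) => fC m q p.1.val p.2.val))))) := by
    intro x y h
    rcases x with (⟨j1,k1⟩ | ⟨j1,i1⟩ | ⟨j1,i1⟩) | (j1 | ⟨j1,i1⟩ | ⟨j1,i1⟩ | ⟨j1,i1⟩) <;>
      rcases y with (⟨j2,k2⟩ | ⟨j2,i2⟩ | ⟨j2,i2⟩) | (j2 | ⟨j2,i2⟩ | ⟨j2,i2⟩ | ⟨j2,i2⟩) <;>
      simp only [Sum.elim_inl, Sum.elim_inr] at h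
    all_goals try (
      exfalso
      have hZ := Nat.zero_le (m*q)
      try have B1a := (BU (m:=m) (k1:ℕ) j1.isLt hm1).1
      try have B1b := (BU (m:=m) (k1:ℕ) j1.isLt hm1).2
      try have B2a := (BV (q:=q) j1.isLt i1.isLt).1
      try have B2b := (BV (q:=q) j1.isLt i1.isLt).2
      try have B3a := (BW (q:=q) j1.isLt i1.isLt).1
      try have B3b := (BW (q:=q) j1.isLt i1.isLt).2
      try have B4a := (BE (q:=q) j1.isLt).1
      try have B4b := (BE (q:=q) j1.isLt).2
      try have B5a := (BA (q:=q) j1.isLt i1.isLt).1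
      try have B5b := (BA (q:=q) j1.isLt i1.isLt).2.1
      try have B6a := (BB (q:=q) j1.isLt i1.isLt).1
      try have B6b := (BB (q:=q) j1.isLt i1.isLt).2
      try have B7a := (BC (q:=q) j1.isLt i1.isLt).1
      try have B7b := (BC (q:=q) j1.isLt i1.isLt).2
      try have C1a := (BU (m:=m) (k2:ℕ) j2.isLt hm1).1
      try have C1b := (BU (m:=m) (k2:ℕ) j2.isLt hm1).2
      try have C2a := (BV (q:=q) j2.isLt i2.isLt).1
      try have C2b := (BV (q:=q) j2.isLt i2.isLt).2
      try have C3a := (BW (q:=q) j2.isLt i2.isLt).1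
      try have C3b := (BW (q:=q) j2.isLt i2.isLt).2
      try have C4a := (BE (q:=q) j2.isLt).1
      try have C4b := (BE (q:=q) j2.isLt).2
      try have C5a := (BA (q:=q) j2.isLt i2.isLt).1
      try have C5b := (BA (q:=q) j2.isLt i2.isLt).2.1
      try have C6a := (BB (q:=q) j2.isLt i2.isLt).1
      try have C6b := (BB (q:=q) j2.isLt i2.isLt).2
      try have C7a := (BC (q:=q) j2.isLt i2.isLt).1
      try have C7b := (BC (q:=q) j2.isLt i2.isLt).2
      linarith)
    -- (u,u)
    · simp only [Sum.inl.injEq, Prod.mk.injEq]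
      unfold fU at h
      have hb1 := j1.isLt; have hb2 := j2.isLt
      split_ifs at h <;>
        exact ⟨Fin.ext (by omega), Fin.ext (by omega)⟩
    -- (v,v)
    · simp only [Sum.inl.injEq, Sum.inr.injEq, Prod.mk.injEq]
      unfold fV at h
      have e1 : 2*m + 1 + (((i1:ℕ)+1)%2)*(m*q) + ((i1:ℕ)/2)*m + (j1:ℕ)
          = 2*m+1 + (((((i1:ℕ)+1)%2)*q + (i1:ℕ)/2)*m + (j1:ℕ)) := by ring
      have e2 : 2*m + 1 + (((i2:ℕ)+1)%2)*(m*q) + ((i2:ℕ)/2)*m + (j2:ℕ)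
          = 2*m+1 + (((((i2:ℕ)+1)%2)*q + (i2:ℕ)/2)*m + (j2:ℕ)) := by ring
      rw [e1, e2] at h
      obtain ⟨hA, hJ⟩ := key1 j1.isLt j2.isLt (Nat.add_left_cancel h)
      have hi1 := i1.isLt; have hi2 := i2.isLt
      obtain ⟨hP, hT⟩ := key1 (m:=q) (by omega : (i1:ℕ)/2 < q) (by omega : (i2:ℕ)/2 < q) hA
      exact ⟨Fin.ext hJ, Fin.ext (by omega)⟩
    -- (w,w)
    · simp only [Sum.inl.injEq, Sum.inr.injEq, Prod.mk.injEq]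
      unfold fW at h
      have e1 : 2*m + 2*(m*q) + 1 + (j1:ℕ)*(q+q) + (i1:ℕ)
          = 2*m+2*(m*q)+1 + ((j1:ℕ)*(q+q) + (i1:ℕ)) := by ring
      have e2 : 2*m + 2*(m*q) + 1 + (j2:ℕ)*(q+q) + (i2:ℕ)
          = 2*m+2*(m*q)+1 + ((j2:ℕ)*(q+q) + (i2:ℕ)) := by ring
      rw [e1, e2] at h
      obtain ⟨hJ, hI⟩ := key1 (m:=q+q) i1.isLt i2.isLt (Nat.add_left_cancel h)
      exact ⟨Fin.ext hJ, Fin.ext hI⟩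
    -- (e,e)
    · simp only [Sum.inr.injEq, Sum.inl.injEq]
      unfold fE at h
      obtain ⟨A, hA⟩ : ∃ A, m*q = A := ⟨_, rfl⟩
      rw [hA] at h
      have hb1 := j1.isLt; have hb2 := j2.isLt
      exact Fin.ext (by omega)
    -- (e,a)
    · exfalso
      have hB := BA (q:=q) j2.isLt i2.isLt
      have hE := BE (q:=q) (m:=m) j1.isLt
      rcases (by omega : (i2:ℕ)%2 = 0 ∨ (i2:ℕ)%2 = 1) with hp | hp
      · linarith [hB.2.2.1 hp, hE.1]
      · linarith [hB.2.2.2 hp, hE.2]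
    -- (a,e)
    · exfalso
      have hB := BA (q:=q) j1.isLt i1.isLt
      have hE := BE (q:=q) (m:=m) j2.isLt
      rcases (by omega : (i1:ℕ)%2 = 0 ∨ (i1:ℕ)%2 = 1) with hp | hp
      · linarith [hB.2.2.1 hp, hE.1]
      · linarith [hB.2.2.2 hp, hE.2]
    -- (a,a)
    · simp only [Sum.inr.injEq, Sum.inl.injEq, Prod.mk.injEq]
      unfold fA at h
      have e1 : 2*m + 4*(m*q) + 1 + ((i1:ℕ)%2)*(m*q+m) + ((i1:ℕ)/2)*m + (j1:ℕ)
          = 2*m+4*(m*q)+1 + (((((i1:ℕ)%2))*(q+1) + (i1:ℕ)/2)*m + (j1:ℕ)) := by ring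
      have e2 : 2*m + 4*(m*q) + 1 + ((i2:ℕ)%2)*(m*q+m) + ((i2:ℕ)/2)*m + (j2:ℕ)
          = 2*m+4*(m*q)+1 + (((((i2:ℕ)%2))*(q+1) + (i2:ℕ)/2)*m + (j2:ℕ)) := by ring
      rw [e1, e2] at h
      obtain ⟨hA, hJ⟩ := key1 j1.isLt j2.isLt (Nat.add_left_cancel h)
      have hi1 := i1.isLt; have hi2 := i2.isLt
      obtain ⟨hP, hT⟩ := key1 (m:=q+1) (by omega : (i1:ℕ)/2 < q+1) (by omega : (i2:ℕ)/2 < q+1) hA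
      exact ⟨Fin.ext hJ, Fin.ext (by omega)⟩
    -- (b,b)
    · simp only [Sum.inr.injEq, Sum.inl.injEq, Prod.mk.injEq]
      unfold fB at h
      have hmq : m*(q+q) = 2*(m*q) := by ring
      have b1 : (j1:ℕ)*(q+q) + (i1:ℕ) + 1 ≤ m*(q+q) := bnd1 j1.isLt i1.isLt
      have b2 : (j2:ℕ)*(q+q) + (i2:ℕ) + 1 ≤ m*(q+q) := bnd1 j2.isLt i2.isLt
      rw [hmq] at b1 b2
      obtain ⟨A, hA⟩ : ∃ A, m*q = A := ⟨_, rfl⟩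
      obtain ⟨X1, hX1⟩ : ∃ X, (j1:ℕ)*(q+q) + (i1:ℕ) = X := ⟨_, rfl⟩
      obtain ⟨X2, hX2⟩ : ∃ X, (j2:ℕ)*(q+q) + (i2:ℕ) = X := ⟨_, rfl⟩
      rw [hA, hX1, hX2] at h
      rw [hA] at b1 b2
      rw [hX1] at b1; rw [hX2] at b2
      have hXX : X1 = X2 := by omega
      rw [← hX1, ← hX2] at hXX
      obtain ⟨hJ, hI⟩ := key1 (m:=q+q) i1.isLt i2.isLt hXX
      exact ⟨Fin.ext hJ, Fin.ext hI⟩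
    -- (c,c)
    · simp only [Sum.inr.injEq, Sum.inl.injEq, Prod.mk.injEq]
      unfold fC at h
      have hqm : (q+q)*m = 2*(m*q) := by ring
      have b1 : (i1:ℕ)*m + (j1:ℕ) + 1 ≤ (q+q)*m := bnd1 i1.isLt j1.isLt
      have b2 : (i2:ℕ)*m + (j2:ℕ) + 1 ≤ (q+q)*m := bnd1 i2.isLt j2.isLt
      rw [hqm] at b1 b2
      obtain ⟨A, hA⟩ : ∃ A, m*q = A := ⟨_, rfl⟩
      obtain ⟨X1, hX1⟩ : ∃ X, (i1:ℕ)*m + (j1:ℕ) = X := ⟨_, rfl⟩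
      obtain ⟨X2, hX2⟩ : ∃ X, (i2:ℕ)*m + (j2:ℕ) = X := ⟨_, rfl⟩
      rw [hA, hX1, hX2] at h
      rw [hA] at b1 b2
      rw [hX1] at b1; rw [hX2] at b2
      have hXX : X1 = X2 := by omega
      rw [← hX1, ← hX2] at hXX
      obtain ⟨hI, hJ⟩ := key1 (m:=m) j1.isLt j2.isLt hXX
      exact ⟨Fin.ext hJ, Fin.ext hI⟩
  refine ⟨_, hinj, ?_, ?_, ?_⟩
  · -- range
    rw [show (2*m*(q+q+1) + m*(3*(q+q)+1)) = 3*m+10*(m*q) by ring]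
    rw [← Set.image_univ, ← Finset.coe_univ, ← Finset.coe_image, ← Finset.coe_Icc]
    refine congrArg _ (Finset.eq_of_subset_of_card_le ?_ ?_)
    · intro y hy
      rw [Finset.mem_image] at hy
      obtain ⟨x, -, rfl⟩ := hy
      rw [Finset.mem_Icc]
      rcases x with (⟨j,k⟩|⟨j,i⟩|⟨j,i⟩)|(j|⟨j,i⟩|⟨j,i⟩|⟨j,i⟩) <;>
        simp only [Sum.elim_inl, Sum.elim_inr]
      · exact ⟨(BU ((k:ℕ)) j.isLt hm1).1,
          by linarith [(BU ((k:ℕ)) j.isLt hm1).2, Nat.zero_le (m*q)]⟩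
      · exact ⟨by linarith [(BV (q:=q) j.isLt i.isLt).1, Nat.zero_le (m*q)],
          by linarith [(BV (q:=q) j.isLt i.isLt).2, Nat.zero_le (m*q)]⟩
      · exact ⟨by linarith [(BW (q:=q) j.isLt i.isLt).1, Nat.zero_le (m*q)],
          by linarith [(BW (q:=q) j.isLt i.isLt).2, Nat.zero_le (m*q)]⟩
      · exact ⟨by linarith [(BE (q:=q) j.isLt).1, Nat.zero_le (m*q)],
          by linarith [(BE (q:=q) j.isLt).2, Nat.zero_le (m*q)]⟩
      · exact ⟨by linarith [(BA (q:=q) j.isLt i.isLt).1, Nat.zero_le (m*q)],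
          by linarith [(BA (q:=q) j.isLt i.isLt).2.1, Nat.zero_le (m*q)]⟩
      · exact ⟨by linarith [(BB (q:=q) j.isLt i.isLt).1, Nat.zero_le (m*q)],
          by linarith [(BB (q:=q) j.isLt i.isLt).2, Nat.zero_le (m*q)]⟩
      · exact ⟨by linarith [(BC (q:=q) j.isLt i.isLt).1, Nat.zero_le (m*q)],
          by linarith [(BC (q:=q) j.isLt i.isLt).2, Nat.zero_le (m*q)]⟩
    · rw [Finset.card_image_of_injective _ hinj, Nat.card_Icc, Nat.add_sub_cancel,
        Finset.card_univ]
      have hc : Fintype.card (((Fin m × Fin 2) ⊕ ((Fin m × Fin (q+q)) ⊕ (Fin m × Fin (q+q)))) ⊕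
          (Fin m ⊕ ((Fin m × Fin (q+q)) ⊕ ((Fin m × Fin (q+q)) ⊕ (Fin m × Fin (q+q)))))) =
          3*m+10*(m*q) := by
        simp [Fintype.card_sum, Fintype.card_prod]
        ring
      rw [hc]
  · -- vertex bound
    intro x
    have hwv : 2*m + 4*(m*q) = 2 * m * (q + q + 1) := by ring
    rcases x with ⟨j, k⟩ | (⟨j, i⟩ | ⟨j, i⟩) <;>
      simp only [Sum.elim_inl, Sum.elim_inr]
    · linarith [(BU k.val j.isLt hm1).2, Nat.zero_le (m*q)]
    · linarith [(BV (q := q) j.isLt i.isLt).2, Nat.zero_le (m*q)]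
    · linarith [(BW (q := q) j.isLt i.isLt).2]
  · -- page sums
    intro j i
    simp only [Sum.elim_inl, Sum.elim_inr]
    have hj := j.isLt
    have hi := i.isLt
    unfold fU fV fW fE fA fB fC
    simp only [Fin.val_zero, Fin.val_one, if_true, if_pos, Fin.isValue]
    norm_num
    obtain ⟨t, p, hp, hIt⟩ : ∃ t p, p < 2 ∧ (i : ℕ) = 2*t + p :=
      ⟨(i : ℕ)/2, (i : ℕ)%2, by omega, by omega⟩
    have ht2 : 2*t + p < q + q := by omega
    have hmq : m*(q+q) = 2*(m*q) := by ring
    have hqm : (q+q)*m = 2*(m*q) := by ring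
    have b3 : (j:ℕ)*(q+q) + ((i:ℕ)) + 1 ≤ m*(q+q) := bnd1 hj hi
    have b4 : ((i:ℕ))*m + (j:ℕ) + 1 ≤ (q+q)*m := bnd1 hi hj
    have c1 : (j:ℕ) ≤ 2*m := by omega
    have c2 : (j:ℕ) ≤ 5*(m*q) + 3*m := by linarith [Nat.zero_le (m*q)]
    have c3 : (j:ℕ)*(q+q) + (i:ℕ) ≤ 3*m + 8*(m*q) := by
      linarith [Nat.zero_le (m*q)]
    have c4 : (i:ℕ)*m + (j:ℕ) ≤ 3*m + 10*(m*q) := by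
      linarith [Nat.zero_le (m*q)]
    rcases (by omega : p = 0 ∨ p = 1) with rfl | rfl
    · rw [show ((i:ℕ)+1)%2 = 1 by omega, show (i:ℕ)%2 = 0 by omega,
        show (i:ℕ)/2 = t by omega]
      rw [show (i:ℕ) = 2*t by omega] at c3 c4 ⊢
      zify [c1, c2, c3, c4]
      ring
    · rw [show ((i:ℕ)+1)%2 = 0 by omega, show (i:ℕ)%2 = 1 by omega,
        show (i:ℕ)/2 = t by omega]
      rw [show (i:ℕ) = 2*t+1 by omega] at c3 c4 ⊢
      zify [c1, c2, c3, c4]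
      ring
end

section
/- For every l ≥ 2 and m, n ≥ 3, the disjoint union of l copies of the generalized antiprism A_m^n admits a C₃-supermagic labeling with magic constant lm(9n−4)+3. -/
namespace LGenAntiprismAux

theorem succMod (m A : ℕ) (hm : 2 ≤ m) :
    (A + 1) % m = if A % m = m - 1 then 0 else A % m + 1 := by
  have h1 : (A + 1) % m = (A % m + 1) % m := by
    conv_lhs => rw [Nat.add_mod]
    rw [Nat.mod_eq_of_lt (show 1 < m by omega)]
  have hA : A % m < m := Nat.mod_lt _ (by omega)
  by_cases h : A % m = m - 1
  · rw [if_pos h, h1, h, show m - 1 + 1 = m by omega, Nat.mod_self]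
  · rw [if_neg h, h1, Nat.mod_eq_of_lt (by omega)]

def uVal (m n i j : ℕ) : ℕ := (m * n + i - j) % m

theorem uVal_lt (m n i j : ℕ) (hm : 2 ≤ m) : uVal m n i j < m :=
  Nat.mod_lt _ (by omega)

theorem uVal_succ_j (m n i j : ℕ) (hm : 2 ≤ m) (hj : j + 1 ≤ m * n) :
    uVal m n i (j + 1) = if uVal m n i j = 0 then m - 1 else uVal m n i j - 1 := by
  unfold uVal
  obtain ⟨P, hP⟩ : ∃ P, m * n = P := ⟨_, rfl⟩
  rw [hP] at hj ⊢
  have hA : P + i - j = (P + i - (j + 1)) + 1 := by omega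
  rw [hA, succMod _ _ hm]
  have h2 : (P + i - (j + 1)) % m < m := Nat.mod_lt _ (by omega)
  generalize (P + i - (j + 1)) % m = x at h2 ⊢
  split_ifs <;> first | omega | simp_all

theorem uVal_succ_i (m n i j : ℕ) (hm : 2 ≤ m) (hi : i < m) (hj : j ≤ m * n) :
    uVal m n ((i + 1) % m) j = if uVal m n i j = m - 1 then 0 else uVal m n i j + 1 := by
  unfold uVal
  obtain ⟨P, hP⟩ : ∃ P, m * n = P := ⟨_, rfl⟩
  rw [hP] at hj ⊢
  have key : (P + (i + 1) % m - j) % m = ((P + i - j) + 1) % m := by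
    rcases Nat.lt_or_ge (i + 1) m with h | h
    · rw [Nat.mod_eq_of_lt h]
      congr 1
      omega
    · have hi1 : (i + 1) % m = 0 := by
        have : i + 1 = m := by omega
        rw [this, Nat.mod_self]
      rw [hi1]
      have h1 : P + 0 - j + m = P + i - j + 1 := by omega
      calc (P + 0 - j) % m = (P + 0 - j + m) % m := (Nat.add_mod_right _ m).symm
        _ = (P + i - j + 1) % m := by rw [h1]
  rw [key, succMod _ _ hm]

theorem uVal_succ_ij (m n i j : ℕ) (hm : 2 ≤ m) (hi : i < m) (hj : j + 1 ≤ m * n) :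
    uVal m n ((i + 1) % m) (j + 1) = uVal m n i j := by
  unfold uVal
  obtain ⟨P, hP⟩ : ∃ P, m * n = P := ⟨_, rfl⟩
  rw [hP] at hj ⊢
  rcases Nat.lt_or_ge (i + 1) m with h | h
  · rw [Nat.mod_eq_of_lt h]
    congr 1
    omega
  · have hi1 : (i + 1) % m = 0 := by
      have : i + 1 = m := by omega
      rw [this, Nat.mod_self]
    rw [hi1]
    have h1 : P + 0 - (j + 1) + m = P + i - j := by omega
    calc (P + 0 - (j + 1)) % m = (P + 0 - (j + 1) + m) % m := (Nat.add_mod_right _ m).symm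
      _ = (P + i - j) % m := by rw [h1]

theorem uVal_inj (m n i i' j : ℕ) (hm : 2 ≤ m) (hi : i < m) (hi' : i' < m) (hj : j ≤ m * n)
    (h : uVal m n i j = uVal m n i' j) : i = i' := by
  have key : ∀ a, a < m → (uVal m n a j + j) % m = a := by
    intro a ha
    unfold uVal
    rw [Nat.mod_add_mod]
    have h1 : m * n + a - j + j = a + m * n := by
      obtain ⟨P, hP⟩ : ∃ P, m * n = P := ⟨_, rfl⟩
      rw [hP] at hj ⊢
      omega
    rw [h1, Nat.add_mul_mod_self_left, Nat.mod_eq_of_lt ha]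
  have e1 := key i hi
  have e2 := key i' hi'
  rw [← e1, ← e2, h]

theorem digit_split {N C C' E E' : ℕ} (hE : E < N) (hE' : E' < N)
    (h : C * N + E = C' * N + E') : C = C' ∧ E = E' := by
  have key : ∀ {a b : ℕ} {x y : ℕ}, x < N → a < b → a * N + x < b * N + y := by
    intro a b x y hx hab
    have h2 : (a + 1) * N ≤ b * N := Nat.mul_le_mul_right N hab
    have h3 : a * N + x < a * N + N := Nat.add_lt_add_left hx _
    have h4 : a * N + N = (a + 1) * N := by ring
    calc a * N + x < (a + 1) * N := h4 ▸ h3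
      _ ≤ b * N := h2
      _ ≤ b * N + y := Nat.le_add_right _ _
  have hC : C = C' := by
    rcases Nat.lt_trichotomy C C' with hlt | he | hlt
    · exact absurd h (Nat.ne_of_lt (key hE hlt))
    · exact he
    · exact absurd h.symm (Nat.ne_of_lt (key hE' hlt))
  refine ⟨hC, ?_⟩
  subst hC
  exact Nat.add_left_cancel h

theorem kmr_lt {l m k r : ℕ} (hk : k < l) (hr : r < m) : k * m + r < l * m := by
  calc k * m + r < k * m + m := Nat.add_lt_add_left hr _
    _ = (k + 1) * m := by ring
    _ ≤ l * m := Nat.mul_le_mul_right m hk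

theorem lab_eq_imp {l m : ℕ} {C C' kk kk' r r' : ℕ}
    (hk : kk < l) (hk' : kk' < l) (hr : r < m) (hr' : r' < m)
    (h : C * (l * m) + kk * m + r + 1 = C' * (l * m) + kk' * m + r' + 1) :
    C = C' ∧ kk = kk' ∧ r = r' := by
  have h' : C * (l * m) + (kk * m + r) = C' * (l * m) + (kk' * m + r') := by
    have := Nat.succ_injective h
    linarith
  obtain ⟨hC, hE⟩ := digit_split (kmr_lt hk hr) (kmr_lt hk' hr') h'
  obtain ⟨h1, h2⟩ := digit_split hr hr' hE
  exact ⟨hC, h1, h2⟩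

theorem lab_le {l m C M k r : ℕ} (hk : k < l) (hr : r < m) (hC : C ≤ M) :
    C * (l * m) + k * m + r + 1 ≤ (M + 1) * (l * m) := by
  have h1 : k * m + r + 1 ≤ l * m := kmr_lt hk hr
  have h2 : C * (l * m) ≤ M * (l * m) := Nat.mul_le_mul_right _ hC
  calc C * (l * m) + k * m + r + 1 = C * (l * m) + (k * m + r + 1) := by ring
    _ ≤ M * (l * m) + l * m := Nat.add_le_add h2 h1
    _ = (M + 1) * (l * m) := by ring


def labA (l m n k i j : ℕ) : ℕ := (n - 1 - j) * (l * m) + k * m + uVal m n i j + 1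
def labB (l m n k i j : ℕ) : ℕ :=
  (3 * n - 2 + j) * (l * m) + (l - 1 - k) * m + (m - 1 - uVal m n i j) + 1
def labC (l m n k i j : ℕ) : ℕ :=
  (n + j) * (l * m) + (l - 1 - k) * m + (if uVal m n i j = 0 then 0 else m - uVal m n i j) + 1
def labD (l m n k i j : ℕ) : ℕ :=
  (2 * n - 1 + j) * (l * m) + (l - 1 - k) * m
    + (if uVal m n i j = m - 1 then m - 1 else m - 2 - uVal m n i j) + 1

theorem nle (m n : ℕ) (hm : 2 ≤ m) : n ≤ m * n := by
  calc n = 1 * n := (one_mul n).symm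
    _ ≤ m * n := Nat.mul_le_mul_right n (by omega)

theorem magic1_core (l m n k j u v w : ℕ) (hl : 2 ≤ l) (hm : 3 ≤ m) (hn : 3 ≤ n)
    (hk : k < l) (hj : j + 1 < n) (hu : u < m)
    (hv : v = if u = 0 then m - 1 else u - 1)
    (hw : w = if u = m - 1 then 0 else u + 1) :
    (n - 1 - j) * (l * m) + k * m + u + 1
      + ((n - 1 - j) * (l * m) + k * m + w + 1)
      + ((n - 1 - (j + 1)) * (l * m) + k * m + v + 1)
      + ((3 * n - 2 + j) * (l * m) + (l - 1 - k) * m + (m - 1 - u) + 1)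
      + ((n + j) * (l * m) + (l - 1 - k) * m + (if u = 0 then 0 else m - u) + 1)
      + ((2 * n - 1 + j) * (l * m) + (l - 1 - k) * m
          + (if u = m - 1 then m - 1 else m - 2 - u) + 1)
    = l * m * (9 * n - 4) + 3 := by
  by_cases h0 : u = 0
  · subst h0
    rw [if_pos rfl] at hv
    rw [if_neg (by omega : ¬(0 : ℕ) = m - 1)] at hw
    subst hv; subst hw
    rw [if_pos rfl, if_neg (by omega : ¬(0 : ℕ) = m - 1)]
    simp only [Nat.sub_zero]
    zify [show j ≤ n - 1 by omega, show (1:ℕ) ≤ n by omega, show j + 1 ≤ n - 1 by omega,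
      show (2:ℕ) ≤ 3 * n by omega, show (1:ℕ) ≤ 2 * n by omega, show k ≤ l - 1 by omega,
      show (1:ℕ) ≤ l by omega, show (1:ℕ) ≤ m by omega, show (2:ℕ) ≤ m by omega,
      show (4:ℕ) ≤ 9 * n by omega]
    ring
  · by_cases h1 : u = m - 1
    · subst h1
      rw [if_neg h0] at hv
      rw [if_pos rfl] at hw
      subst hv; subst hw
      rw [if_neg h0, if_pos rfl]
      zify [show j ≤ n - 1 by omega, show (1:ℕ) ≤ n by omega, show j + 1 ≤ n - 1 by omega,
        show (2:ℕ) ≤ 3 * n by omega, show (1:ℕ) ≤ 2 * n by omega, show k ≤ l - 1 by omega,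
        show (1:ℕ) ≤ l by omega, show (1:ℕ) ≤ m by omega, show (2:ℕ) ≤ m by omega,
        show (1:ℕ) ≤ m - 1 by omega, show m - 1 ≤ m - 1 from le_rfl, show m - 1 ≤ m by omega,
        show (4:ℕ) ≤ 9 * n by omega]
      ring
    · rw [if_neg h0] at hv
      rw [if_neg h1] at hw
      subst hv; subst hw
      rw [if_neg h0, if_neg h1]
      zify [show j ≤ n - 1 by omega, show (1:ℕ) ≤ n by omega, show j + 1 ≤ n - 1 by omega,
        show (2:ℕ) ≤ 3 * n by omega, show (1:ℕ) ≤ 2 * n by omega, show k ≤ l - 1 by omega,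
        show (1:ℕ) ≤ l by omega, show (1:ℕ) ≤ m by omega, show (2:ℕ) ≤ m by omega,
        show (1:ℕ) ≤ u by omega, show u ≤ m - 1 by omega, show u ≤ m - 2 by omega,
        show u ≤ m by omega, show u - 1 ≤ m - 1 by omega,
        show (4:ℕ) ≤ 9 * n by omega]
      ring

theorem magic2_core (l m n k j u v w : ℕ) (hl : 2 ≤ l) (hm : 3 ≤ m) (hn : 3 ≤ n)
    (hk : k < l) (hj : j + 1 < n) (hu : u < m)
    (hv : v = if u = 0 then m - 1 else u - 1)
    (hw : w = if u = m - 1 then 0 else u + 1) :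
    (n - 1 - (j + 1)) * (l * m) + k * m + v + 1
      + ((n - 1 - (j + 1)) * (l * m) + k * m + u + 1)
      + ((n - 1 - j) * (l * m) + k * m + w + 1)
      + ((3 * n - 2 + (j + 1)) * (l * m) + (l - 1 - k) * m + (m - 1 - v) + 1)
      + ((n + j) * (l * m) + (l - 1 - k) * m + (if w = 0 then 0 else m - w) + 1)
      + ((2 * n - 1 + j) * (l * m) + (l - 1 - k) * m
          + (if u = m - 1 then m - 1 else m - 2 - u) + 1)
    = l * m * (9 * n - 4) + 3 := by
  by_cases h0 : u = 0
  · subst h0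
    rw [if_pos rfl] at hv
    rw [if_neg (by omega : ¬(0 : ℕ) = m - 1)] at hw
    subst hv; subst hw
    rw [if_neg (by omega : ¬(0 : ℕ) + 1 = 0), if_neg (by omega : ¬(0 : ℕ) = m - 1)]
    simp only [Nat.sub_zero]
    zify [show j ≤ n - 1 by omega, show (1:ℕ) ≤ n by omega, show j + 1 ≤ n - 1 by omega,
      show (2:ℕ) ≤ 3 * n by omega, show (1:ℕ) ≤ 2 * n by omega, show k ≤ l - 1 by omega,
      show (1:ℕ) ≤ l by omega, show (1:ℕ) ≤ m by omega, show (2:ℕ) ≤ m by omega,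
      show (1:ℕ) ≤ m - 1 by omega, show m - 1 ≤ m - 1 from le_rfl,
      show (0:ℕ) + 1 ≤ m by omega, show (4:ℕ) ≤ 9 * n by omega]
    ring
  · by_cases h1 : u = m - 1
    · subst h1
      rw [if_neg h0] at hv
      rw [if_pos rfl] at hw
      subst hv; subst hw
      rw [if_pos rfl, if_pos rfl]
      zify [show j ≤ n - 1 by omega, show (1:ℕ) ≤ n by omega, show j + 1 ≤ n - 1 by omega,
        show (2:ℕ) ≤ 3 * n by omega, show (1:ℕ) ≤ 2 * n by omega, show k ≤ l - 1 by omega,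
        show (1:ℕ) ≤ l by omega, show (1:ℕ) ≤ m by omega, show (2:ℕ) ≤ m by omega,
        show (1:ℕ) ≤ m - 1 by omega, show m - 1 ≤ m - 1 from le_rfl, show m - 1 ≤ m by omega,
        show m - 1 - 1 ≤ m - 1 by omega, show (1:ℕ) ≤ m - 1 by omega,
        show (4:ℕ) ≤ 9 * n by omega]
      ring
    · rw [if_neg h0] at hv
      rw [if_neg h1] at hw
      subst hv; subst hw
      rw [if_neg (by omega : ¬u + 1 = 0), if_neg h1]
      zify [show j ≤ n - 1 by omega, show (1:ℕ) ≤ n by omega, show j + 1 ≤ n - 1 by omega,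
        show (2:ℕ) ≤ 3 * n by omega, show (1:ℕ) ≤ 2 * n by omega, show k ≤ l - 1 by omega,
        show (1:ℕ) ≤ l by omega, show (1:ℕ) ≤ m by omega, show (2:ℕ) ≤ m by omega,
        show (1:ℕ) ≤ u by omega, show u ≤ m - 1 by omega, show u ≤ m - 2 by omega,
        show u ≤ m by omega, show u - 1 ≤ m - 1 by omega, show u + 1 ≤ m by omega,
        show (4:ℕ) ≤ 9 * n by omega]
      ring

theorem magic1 (l m n k i j : ℕ) (hl : 2 ≤ l) (hm : 3 ≤ m) (hn : 3 ≤ n)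
    (hk : k < l) (hi : i < m) (hj : j + 1 < n) :
    labA l m n k i j + labA l m n k ((i + 1) % m) j + labA l m n k i (j + 1)
      + labB l m n k i j + labC l m n k i j + labD l m n k i j
    = l * m * (9 * n - 4) + 3 := by
  have hmn := nle m n (by omega)
  have h1 := uVal_succ_j m n i j (by omega) (by omega)
  have h2 := uVal_succ_i m n i j (by omega) hi (by omega)
  have hu := uVal_lt m n i j (by omega)
  unfold labA labB labC labD
  rw [h1, h2]
  exact magic1_core l m n k j _ _ _ hl hm hn hk hj hu rfl rfl

theorem magic2 (l m n k i j : ℕ) (hl : 2 ≤ l) (hm : 3 ≤ m) (hn : 3 ≤ n)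
    (hk : k < l) (hi : i < m) (hj : j + 1 < n) :
    labA l m n k i (j + 1) + labA l m n k ((i + 1) % m) (j + 1) + labA l m n k ((i + 1) % m) j
      + labB l m n k i (j + 1) + labC l m n k ((i + 1) % m) j + labD l m n k i j
    = l * m * (9 * n - 4) + 3 := by
  have hmn := nle m n (by omega)
  have h1 := uVal_succ_j m n i j (by omega) (by omega)
  have h2 := uVal_succ_i m n i j (by omega) hi (by omega)
  have h3 := uVal_succ_ij m n i j (by omega) hi (by omega)
  have hu := uVal_lt m n i j (by omega)
  unfold labA labB labC labD
  rw [h1, h2, h3]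
  exact magic2_core l m n k j _ _ _ hl hm hn hk hj hu rfl rfl

theorem rC_lt (m u : ℕ) (hm : 2 ≤ m) (hu : u < m) : (if u = 0 then 0 else m - u) < m := by
  split_ifs <;> omega

theorem rD_lt (m u : ℕ) (hm : 2 ≤ m) : (if u = m - 1 then m - 1 else m - 2 - u) < m := by
  split_ifs <;> omega

theorem rC_inj (m u u' : ℕ) (hm : 2 ≤ m) (hu : u < m) (hu' : u' < m)
    (h : (if u = 0 then 0 else m - u) = (if u' = 0 then 0 else m - u')) : u = u' := by
  split_ifs at h <;> omega

theorem rD_inj (m u u' : ℕ) (hm : 2 ≤ m) (hu : u < m) (hu' : u' < m)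
    (h : (if u = m - 1 then m - 1 else m - 2 - u) = (if u' = m - 1 then m - 1 else m - 2 - u')) :
    u = u' := by
  split_ifs at h <;> omega

def bigF (l m n : ℕ)
    (x : (Fin l × Fin m × Fin n) ⊕ ((Fin l × Fin m × Fin n) ⊕
      ((Fin l × Fin m × Fin (n - 1)) ⊕ (Fin l × Fin m × Fin (n - 1))))) : ℕ :=
  match x with
  | .inl p => labA l m n p.1.1 p.2.1.1 p.2.2.1
  | .inr (.inl p) => labB l m n p.1.1 p.2.1.1 p.2.2.1
  | .inr (.inr (.inl p)) => labC l m n p.1.1 p.2.1.1 p.2.2.1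
  | .inr (.inr (.inr p)) => labD l m n p.1.1 p.2.1.1 p.2.2.1

theorem bigF_inj (l m n : ℕ) (hl : 2 ≤ l) (hm : 3 ≤ m) (hn : 3 ≤ n) :
    Function.Injective (bigF l m n) := by
  have hm2 : 2 ≤ m := by omega
  intro x y h
  rcases x with ⟨kx, ix, jx⟩ | (⟨kx, ix, jx⟩ | (⟨kx, ix, jx⟩ | ⟨kx, ix, jx⟩)) <;>
    rcases y with ⟨ky, iy, jy⟩ | (⟨ky, iy, jy⟩ | (⟨ky, iy, jy⟩ | ⟨ky, iy, jy⟩)) <;>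
    simp only [bigF, labA, labB, labC, labD] at h
  · -- AA
    obtain ⟨hC, hk, hr⟩ := lab_eq_imp kx.isLt ky.isLt (uVal_lt m n (ix:ℕ) (jx:ℕ) hm2) (uVal_lt m n (iy:ℕ) (jy:ℕ) hm2) h
    have hj : (jx:ℕ) = (jy:ℕ) := by have := jx.isLt; have := jy.isLt; omega
    have hkk : (kx:ℕ) = (ky:ℕ) := by have := kx.isLt; have := ky.isLt; omega
    have hu : uVal m n (ix:ℕ) (jx:ℕ) = uVal m n (iy:ℕ) (jy:ℕ) := hr
    rw [hj] at hu
    have hi : (ix:ℕ) = (iy:ℕ) :=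
      uVal_inj m n _ _ _ hm2 ix.isLt iy.isLt (le_trans (by have := jy.isLt; omega) (nle m n hm2)) hu
    simp only [Sum.inl.injEq, Sum.inr.injEq, Prod.mk.injEq]
    exact ⟨Fin.ext hkk, Fin.ext hi, Fin.ext hj⟩
  · -- AB
    obtain ⟨hC, hk, hr⟩ := lab_eq_imp kx.isLt (show l - 1 - (ky:ℕ) < l by omega) (uVal_lt m n (ix:ℕ) (jx:ℕ) hm2) (show m - 1 - uVal m n (iy:ℕ) (jy:ℕ) < m by have := uVal_lt m n (iy:ℕ) (jy:ℕ) hm2; omega) h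
    exfalso
    have := jx.isLt
    have := jy.isLt
    omega
  · -- AC
    obtain ⟨hC, hk, hr⟩ := lab_eq_imp kx.isLt (show l - 1 - (ky:ℕ) < l by omega) (uVal_lt m n (ix:ℕ) (jx:ℕ) hm2) (rC_lt m (uVal m n (iy:ℕ) (jy:ℕ)) hm2 (uVal_lt m n (iy:ℕ) (jy:ℕ) hm2)) h
    exfalso
    have := jx.isLt
    have := jy.isLt
    omega
  · -- AD
    obtain ⟨hC, hk, hr⟩ := lab_eq_imp kx.isLt (show l - 1 - (ky:ℕ) < l by omega) (uVal_lt m n (ix:ℕ) (jx:ℕ) hm2) (rD_lt m (uVal m n (iy:ℕ) (jy:ℕ)) hm2) h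
    exfalso
    have := jx.isLt
    have := jy.isLt
    omega
  · -- BA
    obtain ⟨hC, hk, hr⟩ := lab_eq_imp (show l - 1 - (kx:ℕ) < l by omega) ky.isLt (show m - 1 - uVal m n (ix:ℕ) (jx:ℕ) < m by have := uVal_lt m n (ix:ℕ) (jx:ℕ) hm2; omega) (uVal_lt m n (iy:ℕ) (jy:ℕ) hm2) h
    exfalso
    have := jx.isLt
    have := jy.isLt
    omega
  · -- BB
    obtain ⟨hC, hk, hr⟩ := lab_eq_imp (show l - 1 - (kx:ℕ) < l by omega) (show l - 1 - (ky:ℕ) < l by omega) (show m - 1 - uVal m n (ix:ℕ) (jx:ℕ) < m by have := uVal_lt m n (ix:ℕ) (jx:ℕ) hm2; omega) (show m - 1 - uVal m n (iy:ℕ) (jy:ℕ) < m by have := uVal_lt m n (iy:ℕ) (jy:ℕ) hm2; omega) h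
    have hj : (jx:ℕ) = (jy:ℕ) := by have := jx.isLt; have := jy.isLt; omega
    have hkk : (kx:ℕ) = (ky:ℕ) := by have := kx.isLt; have := ky.isLt; omega
    have hu : uVal m n (ix:ℕ) (jx:ℕ) = uVal m n (iy:ℕ) (jy:ℕ) := by
      have h1 := uVal_lt m n (ix:ℕ) (jx:ℕ) hm2
      have h2 := uVal_lt m n (iy:ℕ) (jy:ℕ) hm2
      omega
    rw [hj] at hu
    have hi : (ix:ℕ) = (iy:ℕ) :=
      uVal_inj m n _ _ _ hm2 ix.isLt iy.isLt (le_trans (by have := jy.isLt; omega) (nle m n hm2)) hu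
    simp only [Sum.inl.injEq, Sum.inr.injEq, Prod.mk.injEq]
    exact ⟨Fin.ext hkk, Fin.ext hi, Fin.ext hj⟩
  · -- BC
    obtain ⟨hC, hk, hr⟩ := lab_eq_imp (show l - 1 - (kx:ℕ) < l by omega) (show l - 1 - (ky:ℕ) < l by omega) (show m - 1 - uVal m n (ix:ℕ) (jx:ℕ) < m by have := uVal_lt m n (ix:ℕ) (jx:ℕ) hm2; omega) (rC_lt m (uVal m n (iy:ℕ) (jy:ℕ)) hm2 (uVal_lt m n (iy:ℕ) (jy:ℕ) hm2)) h
    exfalso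
    have := jx.isLt
    have := jy.isLt
    omega
  · -- BD
    obtain ⟨hC, hk, hr⟩ := lab_eq_imp (show l - 1 - (kx:ℕ) < l by omega) (show l - 1 - (ky:ℕ) < l by omega) (show m - 1 - uVal m n (ix:ℕ) (jx:ℕ) < m by have := uVal_lt m n (ix:ℕ) (jx:ℕ) hm2; omega) (rD_lt m (uVal m n (iy:ℕ) (jy:ℕ)) hm2) h
    exfalso
    have := jx.isLt
    have := jy.isLt
    omega
  · -- CA
    obtain ⟨hC, hk, hr⟩ := lab_eq_imp (show l - 1 - (kx:ℕ) < l by omega) ky.isLt (rC_lt m (uVal m n (ix:ℕ) (jx:ℕ)) hm2 (uVal_lt m n (ix:ℕ) (jx:ℕ) hm2)) (uVal_lt m n (iy:ℕ) (jy:ℕ) hm2) h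
    exfalso
    have := jx.isLt
    have := jy.isLt
    omega
  · -- CB
    obtain ⟨hC, hk, hr⟩ := lab_eq_imp (show l - 1 - (kx:ℕ) < l by omega) (show l - 1 - (ky:ℕ) < l by omega) (rC_lt m (uVal m n (ix:ℕ) (jx:ℕ)) hm2 (uVal_lt m n (ix:ℕ) (jx:ℕ) hm2)) (show m - 1 - uVal m n (iy:ℕ) (jy:ℕ) < m by have := uVal_lt m n (iy:ℕ) (jy:ℕ) hm2; omega) h
    exfalso
    have := jx.isLt
    have := jy.isLt
    omega
  · -- CC
    obtain ⟨hC, hk, hr⟩ := lab_eq_imp (show l - 1 - (kx:ℕ) < l by omega) (show l - 1 - (ky:ℕ) < l by omega) (rC_lt m (uVal m n (ix:ℕ) (jx:ℕ)) hm2 (uVal_lt m n (ix:ℕ) (jx:ℕ) hm2)) (rC_lt m (uVal m n (iy:ℕ) (jy:ℕ)) hm2 (uVal_lt m n (iy:ℕ) (jy:ℕ) hm2)) h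
    have hj : (jx:ℕ) = (jy:ℕ) := by have := jx.isLt; have := jy.isLt; omega
    have hkk : (kx:ℕ) = (ky:ℕ) := by have := kx.isLt; have := ky.isLt; omega
    have hu : uVal m n (ix:ℕ) (jx:ℕ) = uVal m n (iy:ℕ) (jy:ℕ) :=
      rC_inj m _ _ hm2 (uVal_lt m n (ix:ℕ) (jx:ℕ) hm2) (uVal_lt m n (iy:ℕ) (jy:ℕ) hm2) hr
    rw [hj] at hu
    have hi : (ix:ℕ) = (iy:ℕ) :=
      uVal_inj m n _ _ _ hm2 ix.isLt iy.isLt (le_trans (by have := jy.isLt; omega) (nle m n hm2)) hu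
    simp only [Sum.inl.injEq, Sum.inr.injEq, Prod.mk.injEq]
    exact ⟨Fin.ext hkk, Fin.ext hi, Fin.ext hj⟩
  · -- CD
    obtain ⟨hC, hk, hr⟩ := lab_eq_imp (show l - 1 - (kx:ℕ) < l by omega) (show l - 1 - (ky:ℕ) < l by omega) (rC_lt m (uVal m n (ix:ℕ) (jx:ℕ)) hm2 (uVal_lt m n (ix:ℕ) (jx:ℕ) hm2)) (rD_lt m (uVal m n (iy:ℕ) (jy:ℕ)) hm2) h
    exfalso
    have := jx.isLt
    have := jy.isLt
    omega
  · -- DA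
    obtain ⟨hC, hk, hr⟩ := lab_eq_imp (show l - 1 - (kx:ℕ) < l by omega) ky.isLt (rD_lt m (uVal m n (ix:ℕ) (jx:ℕ)) hm2) (uVal_lt m n (iy:ℕ) (jy:ℕ) hm2) h
    exfalso
    have := jx.isLt
    have := jy.isLt
    omega
  · -- DB
    obtain ⟨hC, hk, hr⟩ := lab_eq_imp (show l - 1 - (kx:ℕ) < l by omega) (show l - 1 - (ky:ℕ) < l by omega) (rD_lt m (uVal m n (ix:ℕ) (jx:ℕ)) hm2) (show m - 1 - uVal m n (iy:ℕ) (jy:ℕ) < m by have := uVal_lt m n (iy:ℕ) (jy:ℕ) hm2; omega) h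
    exfalso
    have := jx.isLt
    have := jy.isLt
    omega
  · -- DC
    obtain ⟨hC, hk, hr⟩ := lab_eq_imp (show l - 1 - (kx:ℕ) < l by omega) (show l - 1 - (ky:ℕ) < l by omega) (rD_lt m (uVal m n (ix:ℕ) (jx:ℕ)) hm2) (rC_lt m (uVal m n (iy:ℕ) (jy:ℕ)) hm2 (uVal_lt m n (iy:ℕ) (jy:ℕ) hm2)) h
    exfalso
    have := jx.isLt
    have := jy.isLt
    omega
  · -- DD
    obtain ⟨hC, hk, hr⟩ := lab_eq_imp (show l - 1 - (kx:ℕ) < l by omega) (show l - 1 - (ky:ℕ) < l by omega) (rD_lt m (uVal m n (ix:ℕ) (jx:ℕ)) hm2) (rD_lt m (uVal m n (iy:ℕ) (jy:ℕ)) hm2) h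
    have hj : (jx:ℕ) = (jy:ℕ) := by have := jx.isLt; have := jy.isLt; omega
    have hkk : (kx:ℕ) = (ky:ℕ) := by have := kx.isLt; have := ky.isLt; omega
    have hu : uVal m n (ix:ℕ) (jx:ℕ) = uVal m n (iy:ℕ) (jy:ℕ) :=
      rD_inj m _ _ hm2 (uVal_lt m n (ix:ℕ) (jx:ℕ) hm2) (uVal_lt m n (iy:ℕ) (jy:ℕ) hm2) hr
    rw [hj] at hu
    have hi : (ix:ℕ) = (iy:ℕ) :=
      uVal_inj m n _ _ _ hm2 ix.isLt iy.isLt (le_trans (by have := jy.isLt; omega) (nle m n hm2)) hu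
    simp only [Sum.inl.injEq, Sum.inr.injEq, Prod.mk.injEq]
    exact ⟨Fin.ext hkk, Fin.ext hi, Fin.ext hj⟩

theorem labA_le (l m n k i j : ℕ) (hl : 2 ≤ l) (hm : 3 ≤ m) (hn : 3 ≤ n)
    (hk : k < l) (hj : j < n) : labA l m n k i j ≤ l * m * n := by
  unfold labA
  calc (n - 1 - j) * (l * m) + k * m + uVal m n i j + 1
      ≤ (n - 1 + 1) * (l * m) :=
        lab_le hk (uVal_lt m n i j (by omega)) (show n - 1 - j ≤ n - 1 by omega)
    _ = l * m * n := by rw [show n - 1 + 1 = n by omega]; ring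

theorem labB_le (l m n k i j : ℕ) (hl : 2 ≤ l) (hm : 3 ≤ m) (hn : 3 ≤ n)
    (hk : k < l) (hj : j < n) : labB l m n k i j ≤ (4 * n - 2) * (l * m) := by
  unfold labB
  calc (3 * n - 2 + j) * (l * m) + (l - 1 - k) * m + (m - 1 - uVal m n i j) + 1
      ≤ (4 * n - 3 + 1) * (l * m) :=
        lab_le (show l - 1 - k < l by omega)
          (show m - 1 - uVal m n i j < m by have := uVal_lt m n i j (by omega); omega)
          (show 3 * n - 2 + j ≤ 4 * n - 3 by omega)
    _ = (4 * n - 2) * (l * m) := by rw [show 4 * n - 3 + 1 = 4 * n - 2 by omega]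

theorem labC_le (l m n k i j : ℕ) (hl : 2 ≤ l) (hm : 3 ≤ m) (hn : 3 ≤ n)
    (hk : k < l) (hj : j < n - 1) : labC l m n k i j ≤ (2 * n - 1) * (l * m) := by
  unfold labC
  calc (n + j) * (l * m) + (l - 1 - k) * m
        + (if uVal m n i j = 0 then 0 else m - uVal m n i j) + 1
      ≤ (2 * n - 2 + 1) * (l * m) :=
        lab_le (show l - 1 - k < l by omega)
          (rC_lt m (uVal m n i j) (by omega) (uVal_lt m n i j (by omega)))
          (show n + j ≤ 2 * n - 2 by omega)
    _ = (2 * n - 1) * (l * m) := by rw [show 2 * n - 2 + 1 = 2 * n - 1 by omega]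

theorem labD_le (l m n k i j : ℕ) (hl : 2 ≤ l) (hm : 3 ≤ m) (hn : 3 ≤ n)
    (hk : k < l) (hj : j < n - 1) : labD l m n k i j ≤ (3 * n - 2) * (l * m) := by
  unfold labD
  calc (2 * n - 1 + j) * (l * m) + (l - 1 - k) * m
        + (if uVal m n i j = m - 1 then m - 1 else m - 2 - uVal m n i j) + 1
      ≤ (3 * n - 3 + 1) * (l * m) :=
        lab_le (show l - 1 - k < l by omega)
          (rD_lt m (uVal m n i j) (by omega))
          (show 2 * n - 1 + j ≤ 3 * n - 3 by omega)
    _ = (3 * n - 2) * (l * m) := by rw [show 3 * n - 3 + 1 = 3 * n - 2 by omega]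

theorem hS_eq (l m n : ℕ) (hn : 3 ≤ n) :
    (4 * n - 2) * (l * m) = l * m * n + l * m * (3 * n - 2) := by
  obtain ⟨n', rfl⟩ : ∃ n', n = n' + 3 := ⟨n - 3, by omega⟩
  rw [show 4 * (n' + 3) - 2 = 4 * n' + 10 by omega, show 3 * (n' + 3) - 2 = 3 * n' + 7 by omega]
  ring

theorem bigF_mem (l m n : ℕ) (hl : 2 ≤ l) (hm : 3 ≤ m) (hn : 3 ≤ n) (x) :
    bigF l m n x ∈ Finset.Icc 1 (l * m * n + l * m * (3 * n - 2)) := by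
  have hS := hS_eq l m n hn
  rcases x with ⟨k, i, j⟩ | (⟨k, i, j⟩ | (⟨k, i, j⟩ | ⟨k, i, j⟩)) <;>
    simp only [bigF, Finset.mem_Icc] <;> constructor
  · exact Nat.le_add_left 1 _
  · exact le_trans (labA_le l m n k i j hl hm hn k.isLt j.isLt) (Nat.le_add_right _ _)
  · unfold labB; exact Nat.le_add_left 1 _
  · exact le_of_le_of_eq (labB_le l m n k i j hl hm hn k.isLt j.isLt) hS
  · unfold labC; exact Nat.le_add_left 1 _
  · calc labC l m n (k:ℕ) (i:ℕ) (j:ℕ) ≤ (2 * n - 1) * (l * m) :=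
        labC_le l m n k i j hl hm hn k.isLt j.isLt
      _ ≤ (4 * n - 2) * (l * m) := Nat.mul_le_mul_right _ (by omega)
      _ = _ := hS
  · unfold labD; exact Nat.le_add_left 1 _
  · calc labD l m n (k:ℕ) (i:ℕ) (j:ℕ) ≤ (3 * n - 2) * (l * m) :=
        labD_le l m n k i j hl hm hn k.isLt j.isLt
      _ ≤ (4 * n - 2) * (l * m) := Nat.mul_le_mul_right _ (by omega)
      _ = _ := hS

theorem bigF_range (l m n : ℕ) (hl : 2 ≤ l) (hm : 3 ≤ m) (hn : 3 ≤ n) :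
    Set.range (bigF l m n) = Set.Icc 1 (l * m * n + l * m * (3 * n - 2)) := by
  classical
  have hinj := bigF_inj l m n hl hm hn
  have hsub : Finset.univ.image (bigF l m n)
      ⊆ Finset.Icc 1 (l * m * n + l * m * (3 * n - 2)) := by
    intro v hv
    rw [Finset.mem_image] at hv
    obtain ⟨x, -, rfl⟩ := hv
    exact bigF_mem l m n hl hm hn x
  have hcard : Fintype.card ((Fin l × Fin m × Fin n) ⊕ ((Fin l × Fin m × Fin n) ⊕
      ((Fin l × Fin m × Fin (n - 1)) ⊕ (Fin l × Fin m × Fin (n - 1)))))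
      = l * m * n + l * m * (3 * n - 2) := by
    simp only [Fintype.card_sum, Fintype.card_prod, Fintype.card_fin]
    obtain ⟨n', rfl⟩ : ∃ n', n = n' + 3 := ⟨n - 3, by omega⟩
    rw [show n' + 3 - 1 = n' + 2 by omega, show 3 * (n' + 3) - 2 = 3 * n' + 7 by omega]
    ring
  have him : Finset.univ.image (bigF l m n)
      = Finset.Icc 1 (l * m * n + l * m * (3 * n - 2)) := by
    apply Finset.eq_of_subset_of_card_le hsub
    rw [Finset.card_image_of_injective _ hinj, Finset.card_univ, hcard, Nat.card_Icc]
    omega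
  calc Set.range (bigF l m n) = ↑(Finset.univ.image (bigF l m n)) := by
        rw [Finset.coe_image, Finset.coe_univ, Set.image_univ]
    _ = _ := by rw [him, Finset.coe_Icc]

end LGenAntiprismAux



/-- The disjoint union of `l ≥ 2` copies of the generalized antiprism `Aₘⁿ`
(`m, n ≥ 3`) is `C₃`-supermagic with magic constant `lm(9n - 4) + 3`.
Vertices `v_{i,j}`: `Fin l × Fin m × Fin n` (first coordinate = copy).
Edges: level (cycle) edges `v_{i,j}v_{i+1,j}` (`Fin l × Fin m × Fin n`),
path edges `v_{i,j}v_{i,j+1}` and diagonal edges `v_{i,j+1}v_{i+1,j}`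
(each `Fin l × Fin m × Fin (n-1)`).  Triangles: `v_{i,j}v_{i+1,j}v_{i,j+1}`
and `v_{i,j+1}v_{i+1,j+1}v_{i+1,j}`. -/
theorem lGenAntiprism_C3_supermagic (l m n : ℕ) (hl : 2 ≤ l) (hm : 3 ≤ m) (hn : 3 ≤ n) :
    ∃ f : (Fin l × Fin m × Fin n) ⊕
          ((Fin l × Fin m × Fin n) ⊕
            ((Fin l × Fin m × Fin (n - 1)) ⊕ (Fin l × Fin m × Fin (n - 1)))) → ℕ,
      Function.Injective f ∧
      Set.range f = Set.Icc 1 (l * m * n + l * m * (3 * n - 2)) ∧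
      (∀ x : Fin l × Fin m × Fin n, f (Sum.inl x) ≤ l * m * n) ∧
      (∀ (k : Fin l) (i : Fin m) (j : Fin (n - 1)),
        f (Sum.inl (k, i, ⟨j.val, by have := j.isLt; omega⟩))
          + f (Sum.inl (k, ⟨(i.val + 1) % m, Nat.mod_lt _ (by omega)⟩,
              ⟨j.val, by have := j.isLt; omega⟩))
          + f (Sum.inl (k, i, ⟨j.val + 1, by have := j.isLt; omega⟩))
          + f (Sum.inr (Sum.inl (k, i, ⟨j.val, by have := j.isLt; omega⟩)))
          + f (Sum.inr (Sum.inr (Sum.inl (k, i, j))))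
          + f (Sum.inr (Sum.inr (Sum.inr (k, i, j))))
        = l * m * (9 * n - 4) + 3) ∧
      (∀ (k : Fin l) (i : Fin m) (j : Fin (n - 1)),
        f (Sum.inl (k, i, ⟨j.val + 1, by have := j.isLt; omega⟩))
          + f (Sum.inl (k, ⟨(i.val + 1) % m, Nat.mod_lt _ (by omega)⟩,
              ⟨j.val + 1, by have := j.isLt; omega⟩))
          + f (Sum.inl (k, ⟨(i.val + 1) % m, Nat.mod_lt _ (by omega)⟩,
              ⟨j.val, by have := j.isLt; omega⟩))
          + f (Sum.inr (Sum.inl (k, i, ⟨j.val + 1, by have := j.isLt; omega⟩)))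
          + f (Sum.inr (Sum.inr (Sum.inl (k, ⟨(i.val + 1) % m, Nat.mod_lt _ (by omega)⟩, j))))
          + f (Sum.inr (Sum.inr (Sum.inr (k, i, j))))
        = l * m * (9 * n - 4) + 3) := by
  refine ⟨LGenAntiprismAux.bigF l m n, LGenAntiprismAux.bigF_inj l m n hl hm hn,
    LGenAntiprismAux.bigF_range l m n hl hm hn, ?_, ?_, ?_⟩
  · rintro ⟨k, i, j⟩
    exact LGenAntiprismAux.labA_le l m n k i j hl hm hn k.isLt j.isLt
  · intro k i j
    exact LGenAntiprismAux.magic1 l m n k i j hl hm hn k.isLt i.isLt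
      (by have := j.isLt; omega)
  · intro k i j
    exact LGenAntiprismAux.magic2 l m n k i j hl hm hn k.isLt i.isLt
      (by have := j.isLt; omega)
end

section
/- If a graph G (with at least 2 vertices in every component) satisfies that kG is G-magic for a positive integer k, then |V(G)|+|E(G)| is even or k is odd. -/
/-- The disjoint union `kG` of `k` copies of a graph `G`. -/
def disjCopies {V : Type} (k : ℕ) (G : SimpleGraph V) : SimpleGraph (Fin k × V) where
  Adj x y := x.1 = y.1 ∧ G.Adj x.2 y.2
  symm := ⟨by rintro x y ⟨h1, h2⟩; exact ⟨h1.symm, h2.symm⟩⟩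
  loopless := ⟨by rintro x ⟨-, h⟩; exact G.loopless.irrefl _ h⟩

/-- The canonical embedding of `G` into the `i`-th copy. -/
def embCopy {V : Type} (G : SimpleGraph V) (k : ℕ) (i : Fin k) : G →g disjCopies k G :=
  ⟨fun x => (i, x), fun h => ⟨rfl, h⟩⟩

@[simp] lemma embCopy_apply {V : Type} (G : SimpleGraph V) (k : ℕ) (i : Fin k) (x : V) :
    embCopy G k i x = (i, x) := rfl

lemma gauss_Icc (M : ℕ) : (∑ i ∈ Finset.Icc 1 M, i) * 2 = M * (M + 1) := by
  induction M with
  | zero => simp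
  | succ m ih =>
    rw [Finset.sum_Icc_succ_top (by omega)]
    rw [Nat.add_mul, ih]; ring

lemma sym2_map_const_eq {α β : Type*} {i j : β} {e e' : Sym2 α} (f g : α → β)
    (hf : ∀ x, f x = i) (hg : ∀ x, g x = j) (h : Sym2.map f e = Sym2.map g e') : i = j := by
  induction e using Sym2.ind with | _ x y =>
  induction e' using Sym2.ind with | _ x' y' =>
  rw [Sym2.map_pair_eq, Sym2.map_pair_eq, Sym2.eq_iff] at h
  rcases h with ⟨h1, -⟩ | ⟨h1, -⟩
  · rw [hf x, hg x'] at h1; exact h1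
  · rw [hf x, hg y'] at h1; exact h1

/-- If every component of `G` has at least two vertices (equivalently, `G` has no
isolated vertex) and `kG` is `G`-magic (a bijective total labeling of `kG` onto
`{1,…,|V(kG)|+|E(kG)|}` giving every subgraph copy of `G` the same total weight),
then `|V(G)| + |E(G)|` is even or `k` is odd. -/
theorem kG_Gmagic_parity {V : Type} [Fintype V] (G : SimpleGraph V)
    [Fintype G.edgeSet] (k : ℕ) (hk : 0 < k)
    [Fintype (disjCopies k G).edgeSet]
    (hcomp : ∀ v : V, ∃ w : V, G.Adj v w)
    (hmagic : ∃ f : (Fin k × V) ⊕ (disjCopies k G).edgeSet → ℕ,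
      Function.Injective f ∧
      Set.range f =
        Set.Icc 1 (k * Fintype.card V + k * Fintype.card G.edgeSet) ∧
      ∃ c : ℕ, ∀ φ : G →g disjCopies k G, Function.Injective φ →
        (∑ x : V, f (Sum.inl (φ x))) +
          (∑ e : G.edgeSet, f (Sum.inr (φ.mapEdgeSet e))) = c) :
    Even (Fintype.card V + Fintype.card G.edgeSet) ∨ Odd k := by
  by_contra hcon
  push_neg at hcon
  obtain ⟨hodd, hkeven⟩ := hcon
  rw [Nat.not_even_iff_odd] at hodd
  rw [Nat.not_odd_iff_even] at hkeven
  obtain ⟨f, hinj, hrange, c, hc⟩ := hmagic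
  set n := Fintype.card V + Fintype.card G.edgeSet with hn
  set M := k * Fintype.card V + k * Fintype.card G.edgeSet with hM
  -- bijection between Fin k × edges of G and edges of kG
  have hgbij : Function.Bijective
      (fun p : Fin k × G.edgeSet => (embCopy G k p.1).mapEdgeSet p.2) := by
    constructor
    · rintro ⟨i, e, he⟩ ⟨j, e', he'⟩ h
      simp only [SimpleGraph.Hom.mapEdgeSet, Subtype.mk.injEq] at h
      have h1 : i = j := by
        have h2 := congrArg (Sym2.map Prod.fst) h
        rw [Sym2.map_map, Sym2.map_map] at h2
        exact sym2_map_const_eq _ _ (fun _ => rfl) (fun _ => rfl) h2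
      subst h1
      have h3 : e = e' := Sym2.map.injective
        (f := ⇑(embCopy G k i)) (fun a b hab => congrArg Prod.snd hab) h
      subst h3
      rfl
    · rintro ⟨E, hE⟩
      revert hE
      induction E using Sym2.ind with | _ a b =>
      intro hE
      rw [SimpleGraph.mem_edgeSet] at hE
      obtain ⟨h1, h2⟩ := hE
      obtain ⟨a1, a2⟩ := a
      obtain ⟨b1, b2⟩ := b
      simp only at h1 h2
      subst h1
      exact ⟨(a1, ⟨s(a2, b2), h2⟩), Subtype.ext (Sym2.map_pair_eq _ _ _)⟩
  have hEdge : (∑ i : Fin k, ∑ e : G.edgeSet, f (Sum.inr ((embCopy G k i).mapEdgeSet e)))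
      = ∑ E : (disjCopies k G).edgeSet, f (Sum.inr E) := by
    have h := Fintype.sum_bijective _ hgbij
      (fun p : Fin k × G.edgeSet => f (Sum.inr ((embCopy G k p.1).mapEdgeSet p.2)))
      (fun E => f (Sum.inr E)) (fun p => rfl)
    rw [← h, Fintype.sum_prod_type]
  have hVert : (∑ i : Fin k, ∑ x : V, f (Sum.inl ((embCopy G k i) x)))
      = ∑ p : Fin k × V, f (Sum.inl p) := by
    simp only [embCopy_apply]
    exact (Fintype.sum_prod_type (fun p : Fin k × V => f (Sum.inl p))).symm
  have hkc : k * c = ∑ z : (Fin k × V) ⊕ (disjCopies k G).edgeSet, f z := by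
    calc k * c = ∑ _i : Fin k, c := by
          rw [Finset.sum_const, Finset.card_univ, Fintype.card_fin, smul_eq_mul]
      _ = ∑ i : Fin k, ((∑ x : V, f (Sum.inl ((embCopy G k i) x))) +
            ∑ e : G.edgeSet, f (Sum.inr ((embCopy G k i).mapEdgeSet e))) := by
          refine Finset.sum_congr rfl fun i _ => ?_
          exact (hc (embCopy G k i) (fun a b h => congrArg Prod.snd h)).symm
      _ = (∑ i : Fin k, ∑ x : V, f (Sum.inl ((embCopy G k i) x))) +
            ∑ i : Fin k, ∑ e : G.edgeSet, f (Sum.inr ((embCopy G k i).mapEdgeSet e)) :=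
          Finset.sum_add_distrib
      _ = (∑ p : Fin k × V, f (Sum.inl p)) +
            ∑ E : (disjCopies k G).edgeSet, f (Sum.inr E) := by rw [hVert, hEdge]
      _ = ∑ z : (Fin k × V) ⊕ (disjCopies k G).edgeSet, f z :=
          (Fintype.sum_sum_type f).symm
  have hsum_all : (∑ z : (Fin k × V) ⊕ (disjCopies k G).edgeSet, f z) * 2 = M * (M + 1) := by
    have himg : Finset.image f Finset.univ = Finset.Icc 1 M := by
      apply Finset.coe_injective
      rw [Finset.coe_image, Finset.coe_univ, Set.image_univ, hrange, Finset.coe_Icc]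
    calc (∑ z, f z) * 2 = (∑ m ∈ Finset.image f Finset.univ, m) * 2 := by
          rw [Finset.sum_image (fun x _ y _ h => hinj h)]
      _ = (∑ m ∈ Finset.Icc 1 M, m) * 2 := by rw [himg]
      _ = M * (M + 1) := gauss_Icc M
  have hMn : M = k * n := by rw [hM, hn]; ring
  have key : k * (2 * c) = k * (n * (k * n + 1)) := by
    calc k * (2 * c) = (k * c) * 2 := by ring
      _ = M * (M + 1) := by rw [hkc, hsum_all]
      _ = k * (n * (k * n + 1)) := by rw [hMn]; ring
  have h2c : 2 * c = n * (k * n + 1) := Nat.eq_of_mul_eq_mul_left hk key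
  have hoddR : Odd (n * (k * n + 1)) := by
    refine hodd.mul ?_
    exact (hkeven.mul_right n).add_one
  rw [← h2c] at hoddR
  exact ((Nat.not_odd_iff_even.mpr (even_two_mul c))) hoddR
end

section
/- For every m ≥ 2 and n ≥ 2, the graph mP_n (disjoint union of m paths on n vertices) admits an (m+2, 2)-edge-antimagic vertex labeling, i.e., a bijection f : V(mP_n) → {1, ..., mn} such that the set of edge sums {f(x)+f(y) : xy ∈ E(mP_n)} equals {m+2, m+4, ..., m+2(m(n−1))} — an arithmetic progression with first term m+2 and common difference 2. -/
private lemma rect_inj {m i1 i2 j1 j2 : ℕ} (h1 : j1 < m) (h2 : j2 < m)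
    (h : i1 * m + j1 = i2 * m + j2) : i1 = i2 ∧ j1 = j2 := by
  have hi : i1 = i2 := by
    rcases Nat.lt_trichotomy i1 i2 with h' | h' | h'
    · exfalso; have : i1 + 1 ≤ i2 := h'; nlinarith
    · exact h'
    · exfalso; have : i2 + 1 ≤ i1 := h'; nlinarith
  subst hi; omega

/-- `mPₙ` (m ≥ 2, n ≥ 2) admits an `(m+2, 2)`-edge-antimagic vertex labeling:
a bijection onto `{1,…,mn}` whose edge sums are pairwise distinct and form the
arithmetic progression `{m+2, m+4, …, m+2·m(n-1)}`.
Vertices `Fin m × Fin n`; the edges of `mPₙ` join `(j, i)` and `(j, i+1)` and are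
indexed by `Fin m × Fin (n-1)`. -/
theorem mPath_edge_antimagic_vertex (m n : ℕ) (hm : 2 ≤ m) (hn : 2 ≤ n) :
    ∃ f : Fin m × Fin n → ℕ,
      Function.Injective f ∧
      Set.range f = Set.Icc 1 (m * n) ∧
      Function.Injective (fun p : Fin m × Fin (n - 1) =>
        f (p.1, ⟨p.2.val, by have := p.2.isLt; omega⟩) +
        f (p.1, ⟨p.2.val + 1, by have := p.2.isLt; omega⟩)) ∧
      Set.range (fun p : Fin m × Fin (n - 1) =>
        f (p.1, ⟨p.2.val, by have := p.2.isLt; omega⟩) +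
        f (p.1, ⟨p.2.val + 1, by have := p.2.isLt; omega⟩)) =
      {z : ℕ | ∃ t : ℕ, t < m * (n - 1) ∧ z = (m + 2) + 2 * t} := by
  have hm0 : 0 < m := by omega
  have hkey : (n - 1 + 1) * m = n * m := by rw [Nat.sub_add_cancel (by omega)]
  have hkey2 := Nat.add_mul (n - 1) 1 m
  have hcomm := Nat.mul_comm m n
  have hcomm2 := Nat.mul_comm m (n - 1)
  refine ⟨fun p => p.2.val * m + p.1.val + 1, ?_, ?_, ?_, ?_⟩
  · rintro ⟨j1, i1⟩ ⟨j2, i2⟩ h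
    simp only at h
    have h' : i1.val * m + j1.val = i2.val * m + j2.val := by omega
    obtain ⟨hi, hj⟩ := rect_inj j1.isLt j2.isLt h'
    exact Prod.ext (Fin.ext hj) (Fin.ext hi)
  · ext k
    simp only [Set.mem_range, Set.mem_Icc]
    constructor
    · rintro ⟨⟨j, i⟩, rfl⟩
      have hj := j.isLt; have hi := i.isLt
      have h1 : (i.val + 1) * m ≤ (n - 1 + 1) * m := Nat.mul_le_mul_right m (by omega)
      have h2 := Nat.add_mul i.val 1 m
      simp only
      omega
    · rintro ⟨hk1, hk2⟩
      refine ⟨(⟨(k - 1) % m, Nat.mod_lt _ hm0⟩, ⟨(k - 1) / m,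
        Nat.div_lt_of_lt_mul (by rw [Nat.mul_comm]; omega)⟩), ?_⟩
      show (k - 1) / m * m + (k - 1) % m + 1 = k
      have := Nat.div_add_mod (k - 1) m
      have := Nat.mul_comm m ((k - 1) / m)
      omega
  · rintro ⟨j1, i1⟩ ⟨j2, i2⟩ h
    simp only at h
    have e1 := Nat.add_mul i1.val 1 m
    have e2 := Nat.add_mul i2.val 1 m
    have h' : i1.val * m + j1.val = i2.val * m + j2.val := by omega
    obtain ⟨hi, hj⟩ := rect_inj j1.isLt j2.isLt h'
    exact Prod.ext (Fin.ext hj) (Fin.ext hi)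
  · ext z
    simp only [Set.mem_range, Set.mem_setOf_eq]
    constructor
    · rintro ⟨⟨j, i⟩, rfl⟩
      refine ⟨i.val * m + j.val, ?_, ?_⟩
      · have hj := j.isLt; have hi := i.isLt
        have h1 : (i.val + 1) * m ≤ (n - 1) * m := Nat.mul_le_mul_right m (by omega)
        have h2 := Nat.add_mul i.val 1 m
        omega
      · simp only
        have e1 := Nat.add_mul i.val 1 m
        omega
    · rintro ⟨t, ht, rfl⟩
      refine ⟨(⟨t % m, Nat.mod_lt _ hm0⟩, ⟨t / m,
        Nat.div_lt_of_lt_mul (by rw [Nat.mul_comm]; omega)⟩), ?_⟩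
      show t / m * m + t % m + 1 + ((t / m + 1) * m + t % m + 1) = m + 2 + 2 * t
      have := Nat.div_add_mod t m
      have := Nat.mul_comm m (t / m)
      have h3 := Nat.add_mul (t / m) 1 m
      omega
end
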